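/- arXiv:1705.03857 — 13 statements merged into one kernel-verified Lean document; each statement's English description precedes it below -/
import Mathlib

section
/- For every n ≥ 0, the smallest positive integer d_n such that d_n·(1^n + 2^n + ... + x^n) is a polynomial in x with integer coefficients is divisible by n+1. -/
open Polynomial Finset

/-- `P` agrees at every natural `x` with the power sum `1^n + 2^n + ... + x^n`. -/
def evalPS (n : ℕ) (P : Polynomial ℚ) : Prop :=
  ∀ x : ℕ, P.eval (x : ℚ) = ∑ k ∈ Finset.range (x + 1), (k : ℚ) ^ n

/-- `P` agrees at every natural `x` with `1^n + 2^n + ... + (x-1)^n`. -/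
def evalPS' (n : ℕ) (P : Polynomial ℚ) : Prop :=
  ∀ x : ℕ, P.eval (x : ℚ) = ∑ k ∈ Finset.range x, (k : ℚ) ^ n

/-- all coefficients of `P` are integers. -/
def isIntPoly (P : Polynomial ℚ) : Prop := ∀ i, ∃ z : ℤ, P.coeff i = (z : ℚ)

/-- `d` is the least positive integer such that `d • P` has integer coefficients. -/
def isDenom (P : Polynomial ℚ) (d : ℕ) : Prop :=
  0 < d ∧ isIntPoly ((d : ℚ) • P) ∧
    ∀ e : ℕ, 0 < e → isIntPoly ((e : ℚ) • P) → d ≤ e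

theorem stmt1 (n : ℕ) (P : Polynomial ℚ) (d : ℕ)
    (hP : evalPS n P) (hd : isDenom P d) : (n + 1) ∣ d := by
  classical
  set Q : Polynomial ℚ :=
    (∑ i ∈ Finset.range (n + 1),
      C (_root_.bernoulli i * ((n + 1).choose i : ℚ) / (n + 1)) * X ^ (n + 1 - i)) + X ^ n with hQ
  have hQeval : ∀ x : ℕ, Q.eval (x : ℚ) = ∑ k ∈ Finset.range (x + 1), (k : ℚ) ^ n := by
    intro x
    rw [Finset.sum_range_succ, sum_range_pow x n]
    simp only [hQ, eval_add, eval_finset_sum, eval_mul, eval_C, eval_pow, eval_X]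
    congr 1
    refine Finset.sum_congr rfl fun i _ => ?_
    ring
  have hPQ : P = Q := by
    have hroots : Set.Infinite {x : ℚ | (P - Q).IsRoot x} := by
      refine Set.Infinite.mono ?_ (Set.infinite_range_of_injective (Nat.cast_injective (R := ℚ)))
      rintro _ ⟨x, rfl⟩
      simp [Polynomial.IsRoot, hP x, hQeval x]
    have := Polynomial.eq_zero_of_infinite_isRoot (P - Q) hroots
    exact sub_eq_zero.mp this
  have hcoeff : Q.coeff (n + 1) = 1 / (n + 1) := by
    rw [hQ]
    rw [coeff_add, finset_sum_coeff]
    have h1 : ((X : Polynomial ℚ) ^ n).coeff (n + 1) = 0 := by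
      simp [coeff_X_pow]
    rw [h1, add_zero]
    rw [Finset.sum_eq_single 0]
    · simp [_root_.bernoulli_zero]
    · intro i hi hne
      have hlt : n + 1 - i < n + 1 := by
        have : 1 ≤ i := Nat.one_le_iff_ne_zero.mpr hne
        omega
      simp [coeff_C_mul, coeff_X_pow, Nat.ne_of_lt hlt, (Nat.ne_of_lt hlt).symm]
    · intro h; simp at h
  obtain ⟨z, hz⟩ := hd.2.1 (n + 1)
  rw [Polynomial.coeff_smul, hPQ, hcoeff] at hz
  have hn1 : ((n : ℚ) + 1) ≠ 0 := by positivity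
  have hdq : (d : ℚ) = (z : ℚ) * ((n : ℚ) + 1) := by
    rw [smul_eq_mul] at hz
    field_simp at hz
    linarith [hz]
  have hint : (d : ℤ) = z * (n + 1) := by
    exact_mod_cast hdq
  have : ((n : ℤ) + 1) ∣ (d : ℤ) := ⟨z, by linarith [hint]⟩
  exact_mod_cast this
end

section
/- For every n ≥ 0, the quotient q_n = d_n/(n+1) is a squarefree positive integer, where d_n is the n-th power-sum denominator. -/
open Polynomial Finset

/-- Stirling numbers of the second kind. -/
def st : ℕ → ℕ → ℕ
  | 0, 0 => 1
  | 0, _ + 1 => 0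
  | _ + 1, 0 => 0
  | n + 1, j + 1 => (j + 1) * st n (j + 1) + st n j

@[simp] lemma st_zero_zero : st 0 0 = 1 := rfl
@[simp] lemma st_zero_succ (j : ℕ) : st 0 (j + 1) = 0 := rfl
@[simp] lemma st_succ_zero (n : ℕ) : st (n + 1) 0 = 0 := rfl
lemma st_succ_succ (n j : ℕ) : st (n + 1) (j + 1) = (j + 1) * st n (j + 1) + st n j := rfl

lemma st_eq_zero_of_lt : ∀ {n j : ℕ}, n < j → st n j = 0
  | 0, j + 1, _ => rfl
  | n + 1, j + 1, h => by
      rw [st_succ_succ, st_eq_zero_of_lt (by omega), st_eq_zero_of_lt (by omega)]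
      simp

lemma st_self : ∀ n : ℕ, st n n = 1
  | 0 => rfl
  | n + 1 => by
      rw [st_succ_succ, st_self n, st_eq_zero_of_lt (by omega)]
      simp

/-- `x^n = ∑_j st n j · (x)_j`. -/
lemma pow_eq_sum_st (n : ℕ) (x : ℚ) :
    x ^ n = ∑ j ∈ range (n + 1), (st n j : ℚ) * (descPochhammer ℚ j).eval x := by
  induction n with
  | zero => simp
  | succ n ih =>
    have key : ∀ j : ℕ, x * (descPochhammer ℚ j).eval x
        = (descPochhammer ℚ (j + 1)).eval x + (j : ℚ) * (descPochhammer ℚ j).eval x := by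
      intro j
      rw [descPochhammer_succ_right]
      simp [eval_mul]
      ring
    have step : x ^ (n + 1) = ∑ j ∈ range (n + 1),
        ((st n j : ℚ) * (descPochhammer ℚ (j + 1)).eval x
          + (st n j : ℚ) * ((j : ℚ) * (descPochhammer ℚ j).eval x)) := by
      rw [pow_succ, ih, mul_comm, mul_sum]
      refine Finset.sum_congr rfl fun j _ => ?_
      rw [mul_left_comm, key j]
      ring
    rw [step, Finset.sum_add_distrib]
    rw [Finset.sum_range_succ' (fun j => (st (n + 1) j : ℚ) * (descPochhammer ℚ j).eval x)]
    simp only [st_succ_succ, st_succ_zero]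
    push_cast
    simp only [add_mul]
    rw [Finset.sum_add_distrib]
    have h2 : ∑ j ∈ range (n + 1), (st n j : ℚ) * ((j : ℚ) * (descPochhammer ℚ j).eval x)
        = ∑ j ∈ range (n + 1), ((j:ℚ) + 1) * (st n (j + 1) : ℚ) * (descPochhammer ℚ (j + 1)).eval x := by
      rw [Finset.sum_range_succ (fun j => ((j:ℚ) + 1) * (st n (j + 1) : ℚ) * (descPochhammer ℚ (j + 1)).eval x),
        st_eq_zero_of_lt (show n < n + 1 by omega)]
      rw [Finset.sum_range_succ' (fun j => (st n j : ℚ) * ((j : ℚ) * (descPochhammer ℚ j).eval x))]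
      push_cast
      simp only [Nat.cast_zero, zero_mul, mul_zero, add_zero, zero_add]
      refine Finset.sum_congr rfl fun j _ => by ring
    rw [h2]
    simp only [zero_mul, add_zero, one_mul]
    rw [add_comm]
    congr 1
    exact Finset.sum_congr rfl fun j _ => by ring

lemma hockey (j : ℕ) (N : ℕ) : ∑ k ∈ range N, k.choose j = N.choose (j + 1) := by
  induction N with
  | zero => simp
  | succ N ih => rw [Finset.sum_range_succ, ih, Nat.choose_succ_succ, add_comm]

/-- The Stirling-form power-sum polynomial. -/
noncomputable def Q2 (n : ℕ) : Polynomial ℚ :=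
  ∑ j ∈ range (n + 1), C ((st n j : ℚ) / (j + 1)) * descPochhammer ℚ (j + 1)

/-- The Bernoulli-form power-sum polynomial. -/
noncomputable def Q1 (n : ℕ) : Polynomial ℚ :=
  ∑ i ∈ range (n + 1), C (_root_.bernoulli i * ((n + 1).choose i) / (n + 1)) * X ^ (n + 1 - i)

lemma Q2_eval (n N : ℕ) : (Q2 n).eval (N : ℚ) = ∑ k ∈ range N, (k : ℚ) ^ n := by
  have rhs : ∑ k ∈ range N, (k : ℚ) ^ n
      = ∑ j ∈ range (n + 1), (st n j : ℚ) * ((Nat.factorial j : ℚ) * (N.choose (j + 1) : ℚ)) := by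
    calc ∑ k ∈ range N, (k : ℚ) ^ n
        = ∑ k ∈ range N, ∑ j ∈ range (n + 1), (st n j : ℚ) * (descPochhammer ℚ j).eval (k : ℚ) :=
          Finset.sum_congr rfl fun k _ => pow_eq_sum_st n k
      _ = ∑ j ∈ range (n + 1), ∑ k ∈ range N, (st n j : ℚ) * (descPochhammer ℚ j).eval (k : ℚ) :=
          Finset.sum_comm
      _ = ∑ j ∈ range (n + 1), (st n j : ℚ) * ((Nat.factorial j : ℚ) * (N.choose (j + 1) : ℚ)) := by
          refine Finset.sum_congr rfl fun j _ => ?_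
          rw [← Finset.mul_sum]
          congr 1
          calc ∑ k ∈ range N, (descPochhammer ℚ j).eval (k : ℚ)
              = ∑ k ∈ range N, ((k.descFactorial j : ℕ) : ℚ) :=
                Finset.sum_congr rfl fun k _ => descPochhammer_eval_eq_descFactorial ℚ k j
            _ = ((∑ k ∈ range N, k.descFactorial j : ℕ) : ℚ) := by rw [Nat.cast_sum]
            _ = ((Nat.factorial j * N.choose (j + 1) : ℕ) : ℚ) := by
                congr 1
                simp only [Nat.descFactorial_eq_factorial_mul_choose]
                rw [← Finset.mul_sum, hockey]
            _ = (Nat.factorial j : ℚ) * (N.choose (j + 1) : ℚ) := by push_cast; ring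
  rw [rhs, Q2, eval_finset_sum]
  refine Finset.sum_congr rfl fun j _ => ?_
  rw [eval_mul, eval_C, descPochhammer_eval_eq_descFactorial ℚ N (j + 1),
    Nat.descFactorial_eq_factorial_mul_choose, Nat.factorial_succ]
  have hj : ((j : ℚ) + 1) ≠ 0 := by positivity
  push_cast
  field_simp

lemma Q1_eval (n N : ℕ) : (Q1 n).eval (N : ℚ) = ∑ k ∈ range N, (k : ℚ) ^ n := by
  rw [sum_range_pow, Q1, eval_finset_sum]
  refine Finset.sum_congr rfl fun i _ => ?_
  rw [eval_mul, eval_C, eval_pow, eval_X]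
  push_cast
  ring

lemma eq_of_eval_nat {p q : Polynomial ℚ} (h : ∀ N : ℕ, p.eval (N : ℚ) = q.eval (N : ℚ)) :
    p = q := by
  apply Polynomial.eq_of_infinite_eval_eq
  apply Set.Infinite.mono (show Set.range (Nat.cast : ℕ → ℚ) ⊆ _ from ?_)
  · exact Set.infinite_range_of_injective Nat.cast_injective
  · rintro x ⟨N, rfl⟩
    exact h N

lemma Q1_eq_Q2 (n : ℕ) : Q1 n = Q2 n :=
  eq_of_eval_nat fun N => (Q1_eval n N).trans (Q2_eval n N).symm

lemma dp_coeff_zero (j : ℕ) : (descPochhammer ℚ (j + 1)).coeff 0 = 0 := by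
  rw [Polynomial.coeff_zero_eq_eval_zero, descPochhammer_eval_zero]
  simp

lemma dp_coeff_one : ∀ j : ℕ, (descPochhammer ℚ (j + 1)).coeff 1 = (-1) ^ j * Nat.factorial j
  | 0 => by simp [descPochhammer]
  | j + 1 => by
    rw [descPochhammer_succ_right, mul_sub, coeff_sub, coeff_mul_X, dp_coeff_zero,
      ← C_eq_natCast, mul_comm, coeff_C_mul, dp_coeff_one j]
    push_cast [Nat.factorial_succ]
    ring

lemma Q2_coeff_top (n : ℕ) : (Q2 n).coeff (n + 1) = 1 / (n + 1) := by
  rw [Q2, finset_sum_coeff]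
  rw [Finset.sum_eq_single n]
  · rw [st_self]
    have hm : (descPochhammer ℚ (n + 1)).Monic := monic_descPochhammer ℚ (n + 1)
    rw [coeff_C_mul]
    have h1 := hm.coeff_natDegree
    rw [descPochhammer_natDegree] at h1
    rw [h1]
    simp
  · intro j hj hne
    have hjn : j < n := by
      rcases Finset.mem_range.mp hj with h
      omega
    apply Polynomial.coeff_eq_zero_of_natDegree_lt
    calc (C ((st n j : ℚ) / (j + 1)) * descPochhammer ℚ (j + 1)).natDegree
        ≤ (C ((st n j : ℚ) / (j + 1))).natDegree + (descPochhammer ℚ (j + 1)).natDegree :=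
          natDegree_mul_le
      _ ≤ 0 + (j + 1) := by rw [natDegree_C, descPochhammer_natDegree]
      _ < n + 1 := by omega
  · intro h
    exact absurd (Finset.self_mem_range_succ n) h

lemma Q2_coeff_one (n : ℕ) :
    (Q2 n).coeff 1 = ∑ j ∈ range (n + 1), (st n j : ℚ) / (j + 1) * ((-1) ^ j * Nat.factorial j) := by
  rw [Q2, finset_sum_coeff]
  exact Finset.sum_congr rfl fun j _ => by rw [coeff_C_mul, dp_coeff_one]

lemma Q1_coeff_one (n : ℕ) : (Q1 n).coeff 1 = _root_.bernoulli n := by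
  rw [Q1, finset_sum_coeff]
  rw [Finset.sum_eq_single n]
  · rw [coeff_C_mul, Nat.choose_succ_self_right]
    have h1 : n + 1 - n = 1 := by omega
    rw [h1, pow_one, coeff_X_one, mul_one]
    have h2 : (n : ℚ) + 1 ≠ 0 := by positivity
    push_cast
    field_simp
  · intro i hi hne
    have h := Finset.mem_range.mp hi
    rw [coeff_C_mul, coeff_X_pow, if_neg (show ¬1 = n + 1 - i by omega), mul_zero]
  · intro h
    exact absurd (Finset.self_mem_range_succ n) h

lemma bernoulli_formula (n : ℕ) :
    _root_.bernoulli n = ∑ j ∈ range (n + 1), (st n j : ℚ) / (j + 1) * ((-1) ^ j * Nat.factorial j) := by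
  rw [← Q1_coeff_one, Q1_eq_Q2, Q2_coeff_one]

/-- product of all primes up to `n+1`. -/
def Lp (n : ℕ) : ℕ := ∏ p ∈ Finset.filter Nat.Prime (range (n + 2)), p

lemma Lp_pos (n : ℕ) : 0 < Lp n :=
  Finset.prod_pos fun p hp => (Finset.mem_filter.mp hp).2.pos

lemma Lp_factorization_le_one (n : ℕ) (q : ℕ) : (Lp n).factorization q ≤ 1 := by
  rw [Lp, Nat.factorization_prod (fun p hp => (Finset.mem_filter.mp hp).2.ne_zero)]
  rw [Finsupp.finset_sum_apply]
  have : ∀ p ∈ Finset.filter Nat.Prime (range (n + 2)),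
      (Nat.factorization p) q = if p = q then 1 else 0 := by
    intro p hp
    rw [(Finset.mem_filter.mp hp).2.factorization, Finsupp.single_apply]
  rw [Finset.sum_congr rfl this, Finset.sum_ite_eq']
  split <;> simp

lemma Lp_squarefree (n : ℕ) : Squarefree (Lp n) :=
  Nat.squarefree_of_factorization_le_one (Lp_pos n).ne' (Lp_factorization_le_one n)

lemma succ_dvd_Lp_mul_factorial {n j : ℕ} (hj : j ≤ n) : (j + 1) ∣ Lp n * Nat.factorial j := by
  have hL0 : Lp n ≠ 0 := (Lp_pos n).ne'
  have hf0 : Nat.factorial j ≠ 0 := (Nat.factorial_pos j).ne'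
  rw [← Nat.factorization_le_iff_dvd (by omega) (by positivity)]
  rw [Finsupp.le_def]
  intro p
  by_cases hk0 : (j + 1).factorization p = 0
  · simp [hk0]
  by_cases hp : p.Prime
  swap
  · rw [Nat.factorization_eq_zero_of_not_prime _ hp] at hk0
    exact absurd rfl hk0
  haveI : Fact p.Prime := ⟨hp⟩
  set k := (j + 1).factorization p with hk
  have hk1 : 1 ≤ k := Nat.one_le_iff_ne_zero.mpr hk0
  have hpd : p ∣ j + 1 := Nat.dvd_of_factorization_pos hk0
  have hple : p ≤ j + 1 := Nat.le_of_dvd (by omega) hpd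
  have hpmem : p ∈ Finset.filter Nat.Prime (range (n + 2)) :=
    Finset.mem_filter.mpr ⟨Finset.mem_range.mpr (by omega), hp⟩
  rw [Nat.factorization_mul hL0 hf0, Finsupp.add_apply]
  have hL1 : 1 ≤ (Lp n).factorization p :=
    hp.factorization_pos_of_dvd hL0 (Finset.dvd_prod_of_mem _ hpmem)
  have hfact : k - 1 ≤ (Nat.factorial j).factorization p := by
    have hpk : p ^ k ∣ j + 1 := Nat.ordProj_dvd (j + 1) p
    have hpkle : p ^ k ≤ j + 1 := Nat.le_of_dvd (by omega) hpk
    have hp2 : 2 ≤ p := hp.two_le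
    have hpow1 : 1 ≤ p ^ (k - 1) := Nat.one_le_pow _ _ hp.pos
    have hpk1 : p ^ (k - 1) ≤ j := by
      have : p * p ^ (k - 1) ≤ j + 1 := by
        rw [← pow_succ']
        calc p ^ (k - 1 + 1) = p ^ k := by rw [Nat.sub_add_cancel hk1]
          _ ≤ j + 1 := hpkle
      nlinarith
    rw [Nat.factorization_def _ hp,
      padicValNat_factorial (b := max k (Nat.log p j + 1)) (by omega)]
    calc k - 1 = (Finset.Ico 1 k).card := (Nat.card_Ico 1 k).symm
      _ = ∑ _i ∈ Finset.Ico 1 k, 1 := by rw [Finset.sum_const, smul_eq_mul, mul_one]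
      _ ≤ ∑ i ∈ Finset.Ico 1 k, j / p ^ i := by
        refine Finset.sum_le_sum fun i hi => ?_
        rcases Finset.mem_Ico.mp hi with ⟨h1, h2⟩
        rw [Nat.one_le_div_iff (pow_pos hp.pos i)]
        calc p ^ i ≤ p ^ (k - 1) := Nat.pow_le_pow_right hp.pos (by omega)
          _ ≤ j := hpk1
      _ ≤ ∑ i ∈ Finset.Ico 1 (max k (Nat.log p j + 1)), j / p ^ i :=
        Finset.sum_le_sum_of_subset (Finset.Ico_subset_Ico le_rfl (le_max_left _ _))
  omega

lemma Lp_mul_bernoulli_int {n i : ℕ} (hi : i ≤ n) :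
    ∃ z : ℤ, (Lp n : ℚ) * _root_.bernoulli i = (z : ℚ) := by
  refine ⟨∑ j ∈ range (i + 1), (-1) ^ j * (st i j : ℤ) * ((Lp n * Nat.factorial j) / (j + 1) : ℕ), ?_⟩
  rw [bernoulli_formula i, Finset.mul_sum, Int.cast_sum]
  refine Finset.sum_congr rfl fun j hj => ?_
  have hjn : j ≤ n := by
    have := Finset.mem_range.mp hj
    omega
  rw [Int.cast_mul, Int.cast_mul, Int.cast_natCast, Int.cast_natCast,
    Nat.cast_div (succ_dvd_Lp_mul_factorial hjn) (by positivity)]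
  push_cast
  have h1 : (j : ℚ) + 1 ≠ 0 := by positivity
  field_simp

lemma isIntPoly_map (q : Polynomial ℤ) : isIntPoly (q.map (Int.castRingHom ℚ)) :=
  fun i => ⟨q.coeff i, by simp⟩

lemma isIntPoly_iff_exists {P : Polynomial ℚ} :
    isIntPoly P ↔ ∃ q : Polynomial ℤ, q.map (Int.castRingHom ℚ) = P := by
  constructor
  · intro h
    have : P ∈ (Polynomial.mapRingHom (Int.castRingHom ℚ)).range := by
      rw [Polynomial.mem_map_range]
      intro i
      obtain ⟨z, hz⟩ := h i
      exact ⟨z, hz.symm⟩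
    obtain ⟨q, hq⟩ := this
    exact ⟨q, hq⟩
  · rintro ⟨q, rfl⟩
    exact isIntPoly_map q

lemma isIntPoly_comp {Q : Polynomial ℚ} (h : isIntPoly Q) : isIntPoly (Q.comp (X + 1)) := by
  obtain ⟨q, rfl⟩ := isIntPoly_iff_exists.mp h
  rw [isIntPoly_iff_exists]
  refine ⟨q.comp (X + 1), ?_⟩
  rw [Polynomial.map_comp]
  simp

lemma isIntPoly_zero : isIntPoly (0 : Polynomial ℚ) := fun i => ⟨0, by simp⟩

lemma isIntPoly_add {p q : Polynomial ℚ} (hp : isIntPoly p) (hq : isIntPoly q) :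
    isIntPoly (p + q) := by
  intro i
  obtain ⟨z1, h1⟩ := hp i
  obtain ⟨z2, h2⟩ := hq i
  exact ⟨z1 + z2, by rw [coeff_add, h1, h2]; push_cast; ring⟩

lemma isIntPoly_sum {α : Type*} {s : Finset α} {f : α → Polynomial ℚ}
    (h : ∀ a ∈ s, isIntPoly (f a)) : isIntPoly (∑ a ∈ s, f a) :=
  Finset.sum_induction f isIntPoly (fun _ _ => isIntPoly_add) isIntPoly_zero h

lemma isIntPoly_C_mul_X_pow (z : ℤ) (k : ℕ) : isIntPoly (C (z : ℚ) * X ^ k) := by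
  intro i
  rw [coeff_C_mul, coeff_X_pow]
  split
  · exact ⟨z, by simp⟩
  · exact ⟨0, by simp⟩

lemma denom_dvd {P : Polynomial ℚ} {d : ℕ} (hd : isDenom P d) {e : ℕ} (he : 0 < e)
    (hint : isIntPoly ((e : ℚ) • P)) : d ∣ e := by
  obtain ⟨hd0, hdint, hmin⟩ := hd
  set g := Nat.gcd d e with hg
  have hg0 : 0 < g := Nat.gcd_pos_of_pos_left _ hd0
  have hgint : isIntPoly ((g : ℚ) • P) := by
    intro i
    obtain ⟨z1, h1⟩ := hdint i
    obtain ⟨z2, h2⟩ := hint i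
    rw [coeff_smul, smul_eq_mul] at h1 h2
    refine ⟨Nat.gcdA d e * z1 + Nat.gcdB d e * z2, ?_⟩
    rw [coeff_smul, smul_eq_mul]
    have hb : (g : ℚ) = (d : ℚ) * (Nat.gcdA d e : ℚ) + (e : ℚ) * (Nat.gcdB d e : ℚ) := by
      exact_mod_cast congrArg (fun z : ℤ => (z : ℚ)) (Nat.gcd_eq_gcd_ab d e)
    rw [hb]
    push_cast
    linear_combination (Nat.gcdA d e : ℚ) * h1 + (Nat.gcdB d e : ℚ) * h2
  have hle : d ≤ g := hmin g hg0 hgint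
  have hdvd : g ∣ d := Nat.gcd_dvd_left d e
  have : g = d := by
    have := Nat.le_of_dvd hd0 hdvd
    omega
  rw [← this]
  exact Nat.gcd_dvd_right d e

lemma Q2_natDegree (n : ℕ) : (Q2 n).natDegree = n + 1 := by
  have hub : (Q2 n).natDegree ≤ n + 1 := by
    rw [Q2]
    refine Polynomial.natDegree_sum_le_of_forall_le _ _ fun j hj => ?_
    calc (C ((st n j : ℚ) / (j + 1)) * descPochhammer ℚ (j + 1)).natDegree
        ≤ (C ((st n j : ℚ) / (j + 1))).natDegree + (descPochhammer ℚ (j + 1)).natDegree :=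
          natDegree_mul_le
      _ ≤ 0 + (j + 1) := by rw [natDegree_C, descPochhammer_natDegree]
      _ ≤ n + 1 := by
          have := Finset.mem_range.mp hj
          omega
  have hne : (Q2 n).coeff (n + 1) ≠ 0 := by
    rw [Q2_coeff_top]
    positivity
  have hlb : n + 1 ≤ (Q2 n).natDegree := le_natDegree_of_ne_zero hne
  omega

lemma P_coeff_top {n : ℕ} {P : Polynomial ℚ} (hPQ : P = (Q2 n).comp (X + 1)) :
    P.coeff (n + 1) = 1 / (n + 1) := by
  have hX1 : (X + 1 : Polynomial ℚ).natDegree = 1 := by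
    rw [show (X + 1 : Polynomial ℚ) = X + C 1 by simp]
    exact natDegree_X_add_C 1
  have hdeg : P.natDegree = n + 1 := by
    rw [hPQ, natDegree_comp, Q2_natDegree, hX1, mul_one]
  have hlc : P.leadingCoeff = (Q2 n).leadingCoeff := by
    rw [hPQ, Polynomial.leadingCoeff_comp (by rw [hX1]; omega)]
    have : (X + 1 : Polynomial ℚ).leadingCoeff = 1 := by
      rw [show (X + 1 : Polynomial ℚ) = X + C 1 by simp]
      exact leadingCoeff_X_add_C 1
    rw [this, one_pow, mul_one]
  have := hlc
  rw [Polynomial.leadingCoeff, Polynomial.leadingCoeff, hdeg, Q2_natDegree] at this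
  rw [this, Q2_coeff_top]

lemma Q1_smul_int (n : ℕ) : isIntPoly ((((n + 1) * Lp n : ℕ) : ℚ) • Q1 n) := by
  rw [Q1, Finset.smul_sum]
  apply isIntPoly_sum
  intro i hi
  have hin : i ≤ n := by
    have := Finset.mem_range.mp hi
    omega
  obtain ⟨z, hz⟩ := Lp_mul_bernoulli_int hin
  have key : (((n + 1) * Lp n : ℕ) : ℚ) •
      (C (_root_.bernoulli i * ((n + 1).choose i) / (n + 1)) * X ^ (n + 1 - i))
      = C ((z * ((n + 1).choose i) : ℤ) : ℚ) * X ^ (n + 1 - i) := by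
    rw [Polynomial.smul_eq_C_mul, ← mul_assoc, ← C_mul]
    congr 1
    have h1 : (n : ℚ) + 1 ≠ 0 := by positivity
    have h2 : (((n + 1) * Lp n : ℕ) : ℚ) * (_root_.bernoulli i * ((n + 1).choose i) / (n + 1))
        = ((Lp n : ℚ) * _root_.bernoulli i) * ((n + 1).choose i) := by
      push_cast
      field_simp
    rw [h2, hz]
    push_cast
    ring
  rw [key]
  exact isIntPoly_C_mul_X_pow _ _

theorem stmt2 (n : ℕ) (P : Polynomial ℚ) (d : ℕ)
    (hP : evalPS n P) (hd : isDenom P d) :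
    (n + 1) ∣ d ∧ 0 < d / (n + 1) ∧ Squarefree (d / (n + 1)) := by
  have hPQ : P = (Q2 n).comp (X + 1) := by
    apply eq_of_eval_nat
    intro N
    rw [hP N, eval_comp]
    simp only [eval_add, eval_X, eval_one]
    rw [show (N : ℚ) + 1 = ((N + 1 : ℕ) : ℚ) by push_cast; ring, Q2_eval]
  have htop := P_coeff_top hPQ
  obtain ⟨hd0, hdint, hmin⟩ := hd
  obtain ⟨z, hz⟩ := hdint (n + 1)
  rw [coeff_smul, smul_eq_mul, htop] at hz
  have h1 : (n : ℚ) + 1 ≠ 0 := by positivity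
  rw [mul_one_div, div_eq_iff h1] at hz
  have hzint : (d : ℤ) = z * (n + 1) := by exact_mod_cast hz
  have hdvd1 : (n + 1) ∣ d := by
    have : ((n + 1 : ℕ) : ℤ) ∣ (d : ℤ) := ⟨z, by push_cast; linarith⟩
    exact_mod_cast this
  have hE : isIntPoly ((((n + 1) * Lp n : ℕ) : ℚ) • P) := by
    have h2 : P = (Q1 n).comp (X + 1) := by rw [hPQ, Q1_eq_Q2]
    rw [h2, ← Polynomial.smul_comp]
    exact isIntPoly_comp (Q1_smul_int n)
  have hEpos : 0 < (n + 1) * Lp n := Nat.mul_pos (by omega) (Lp_pos n)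
  have hdvd2 : d ∣ (n + 1) * Lp n := denom_dvd ⟨hd0, hdint, hmin⟩ hEpos hE
  obtain ⟨k, hk⟩ := hdvd1
  have hkq : d / (n + 1) = k := by
    rw [hk]
    exact Nat.mul_div_cancel_left k (by omega)
  have hkL : k ∣ Lp n := by
    rw [hk] at hdvd2
    exact (Nat.mul_dvd_mul_iff_left (show 0 < n + 1 by omega)).mp hdvd2
  refine ⟨⟨k, hk⟩, ?_, ?_⟩
  · rw [hkq]
    rcases Nat.eq_zero_or_pos k with h | h
    · rw [h, mul_zero] at hk
      omega
    · exact h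
  · rw [hkq]
    exact Squarefree.squarefree_of_dvd hkL (Lp_squarefree n)
end

section
/- For every n ≥ 1, the power-sum denominator d_n is even. -/
open Polynomial Finset

theorem stmt3 (n : ℕ) (hn : 1 ≤ n) (P : Polynomial ℚ) (d : ℕ)
    (hP : evalPS n P) (hd : isDenom P d) : Even d := by
  set Q : Polynomial ℚ := (d : ℚ) • P with hQ
  have hint : isIntPoly Q := hd.2.1
  -- lift Q to an integer polynomial
  have hlift : Q ∈ Polynomial.lifts (Int.castRingHom ℚ) := by
    rw [Polynomial.lifts_iff_coeff_lifts]
    intro i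
    obtain ⟨z, hz⟩ := hint i
    exact ⟨z, hz.symm⟩
  obtain ⟨q, hq⟩ := (Polynomial.mem_lifts Q).mp hlift
  -- evaluations of q at integers match Q at rationals
  have hqeval : ∀ m : ℕ, ((q.eval (m : ℤ) : ℤ) : ℚ) = Q.eval (m : ℚ) := by
    intro m
    rw [← hq]
    simp [Polynomial.eval_map, Polynomial.eval₂_at_intCast]
  have hQ0 : Q.eval 0 = 0 := by
    have := hP 0
    simp only [Nat.cast_zero] at this
    simp [hQ, this, zero_pow (by omega : n ≠ 0)]
  have hQ2 : Q.eval 2 = (d : ℚ) * (1 + 2 ^ n) := by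
    have h2 := hP 2
    have : P.eval (2 : ℚ) = 1 + 2 ^ n := by
      rw [show ((2 : ℕ) : ℚ) = 2 by norm_num] at h2
      rw [h2]
      rw [Finset.sum_range_succ, Finset.sum_range_succ, Finset.sum_range_succ]
      simp [zero_pow (by omega : n ≠ 0)]
    simp [hQ, this]
  have he0 : q.eval 0 = 0 := by
    have := hqeval 0
    simp only [Nat.cast_zero] at this
    exact_mod_cast this.trans hQ0
  have he2 : ((q.eval 2 : ℤ) : ℚ) = (d : ℚ) * (1 + 2 ^ n) := by
    have := hqeval 2
    simp only [Nat.cast_ofNat] at this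
    rw [this, hQ2]
  have he2' : q.eval 2 = (d : ℤ) * (1 + 2 ^ n) := by
    exact_mod_cast he2
  have hdvd : (2 : ℤ) ∣ q.eval 2 - q.eval 0 := by
    have := Polynomial.sub_dvd_eval_sub (2 : ℤ) 0 q
    simpa using this
  rw [he2', he0, sub_zero] at hdvd
  have hodd : ¬ (2:ℤ) ∣ (1 + 2 ^ n) := by
    intro h
    have h2 : (2:ℤ) ∣ 2 ^ n := dvd_pow_self 2 (by omega)
    omega
  have h2d : (2 : ℤ) ∣ (d : ℤ) :=
    ((Int.prime_two.dvd_mul).mp hdvd).resolve_right hodd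
  have : (2 : ℕ) ∣ d := by exact_mod_cast h2d
  exact even_iff_two_dvd.mpr this
end

section
/- For n ≥ 0, the quotient q_n = d_n/(n+1) is odd if and only if n = 2^r - 1 for some integer r ≥ 0. -/
open Polynomial Finset

/-- multiplying by a positive nat integer-ness vs denominator dvd -/
lemma int_mul_iff (q : ℚ) (e : ℕ) (he : 0 < e) :
    (∃ z : ℤ, (e : ℚ) * q = (z : ℚ)) ↔ (q.den : ℕ) ∣ e := by
  constructor
  · rintro ⟨z, hz⟩
    have he' : (e:ℚ) ≠ 0 := by positivity
    have : q = (z : ℚ) / (e : ℚ) := by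
      rw [eq_div_iff he']
      rw [mul_comm] at hz
      exact hz
    have h2 : q = Rat.divInt z (e : ℤ) := by
      rw [this, Rat.divInt_eq_div]; norm_cast
    have := Rat.den_dvd z (e : ℤ)
    rw [← h2] at this
    exact_mod_cast this
  · rintro ⟨k, hk⟩
    refine ⟨k * q.num, ?_⟩
    push_cast
    rw [hk]
    push_cast
    rw [mul_comm (q.den : ℚ) (k:ℚ), mul_assoc]
    congr 1
    rw [mul_comm]
    exact_mod_cast q.mul_den_eq_num

/-- if valuation is negative, denominator valuation is minus it -/
lemma den2_eq (q : ℚ) (hq : q ≠ 0) (h : padicValRat 2 q < 0) :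
    (padicValNat 2 q.den : ℤ) = -padicValRat 2 q := by
  have hnum : q.num ≠ 0 := Rat.num_ne_zero.2 hq
  have hco := q.reduced
  by_cases hdvd : (2 : ℕ) ∣ q.num.natAbs
  · have hnd : ¬ (2:ℕ) ∣ q.den := by
      intro h2
      have := Nat.dvd_gcd hdvd h2
      rw [Nat.Coprime] at hco
      rw [hco] at this
      norm_num at this
    have hden0 : padicValNat 2 q.den = 0 := padicValNat.eq_zero_of_not_dvd hnd
    rw [padicValRat_def, hden0] at h
    have : (0:ℤ) ≤ padicValInt 2 q.num := by positivity
    omega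
  · have : padicValInt 2 q.num = 0 := by
      unfold padicValInt
      exact padicValNat.eq_zero_of_not_dvd hdvd
    rw [padicValRat_def, this]
    ring

/-- valuation monotone under divisibility -/
lemma pv_le_of_dvd {a b : ℕ} (hb : b ≠ 0) (h : a ∣ b) : padicValNat 2 a ≤ padicValNat 2 b := by
  have ha : a ≠ 0 := by rintro rfl; exact hb (Nat.eq_zero_of_zero_dvd h)
  have : (2:ℕ) ^ padicValNat 2 a ∣ b := dvd_trans pow_padicValNat_dvd h
  rw [padicValNat_dvd_iff] at this
  tauto

lemma pv_le_of_lt_pow {i r : ℕ} (hi : 0 < i) (h : i < 2 ^ r) : padicValNat 2 i ≤ r - 1 := by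
  by_contra hc
  push_neg at hc
  have h1 : r ≤ padicValNat 2 i := by omega
  have : (2:ℕ) ^ r ≤ 2 ^ padicValNat 2 i := Nat.pow_le_pow_right (by norm_num) h1
  have h2 : (2:ℕ) ^ padicValNat 2 i ∣ i := pow_padicValNat_dvd
  have := Nat.le_of_dvd hi h2
  omega

/-- binomial approx mod a² -/
lemma modsq (a b : ℤ) (n : ℕ) :
    (b + a) ^ (n + 1) ≡ b ^ (n + 1) + (n + 1) * a * b ^ n [ZMOD a ^ 2] := by
  induction n with
  | zero => simp [Int.ModEq.refl]
  | succ n ih =>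
    have h2 : (b + a) ^ (n + 1) * (b + a) ≡ (b ^ (n + 1) + (n + 1) * a * b ^ n) * (b + a)
        [ZMOD a ^ 2] := Int.ModEq.mul_right _ ih
    have h4 : b ^ (n + 2) + ((n:ℤ) + 2) * a * b ^ (n + 1) + ((n+1) * b ^ n) * a ^ 2 ≡
        b ^ (n + 2) + ((n:ℤ) + 2) * a * b ^ (n + 1) + 0 [ZMOD a ^ 2] :=
      Int.ModEq.add_left _ (Int.modEq_zero_iff_dvd.2 ⟨(n+1) * b ^ n, by ring⟩)
    calc (b + a) ^ (n + 2) = (b + a) ^ (n + 1) * (b + a) := by ring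
      _ ≡ (b ^ (n + 1) + (n + 1) * a * b ^ n) * (b + a) [ZMOD a ^ 2] := h2
      _ = b ^ (n + 2) + ((n:ℤ) + 2) * a * b ^ (n + 1) + ((n+1) * b ^ n) * a ^ 2 := by push_cast (config := {}); ring
      _ ≡ b ^ (n + 2) + ((n:ℤ) + 2) * a * b ^ (n + 1) + 0 [ZMOD a ^ 2] := h4
      _ = b ^ (n + 2) + ((n:ℤ) + 1 + 1) * a * b ^ (n + 1) := by push_cast; ring

/-- key congruence for power sums over `2^m` -/
lemma Tcong (k : ℕ) (hk : 2 ≤ k) (hek : Even k) :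
    ∀ m, 2 ≤ m → (∑ j ∈ Finset.range (2 ^ m), (j : ℤ) ^ k) ≡ 2 ^ (m - 1) [ZMOD (2:ℤ) ^ m] := by
  intro m
  induction m with
  | zero => omega
  | succ m ih =>
    intro hm
    rcases Nat.lt_or_ge m 2 with hm2 | hm2
    · -- base case : m + 1 = 2
      have hm1 : m = 1 := by omega
      subst hm1
      have hsum : (∑ j ∈ Finset.range (2 ^ 2), (j : ℤ) ^ k) = 1 + 2 ^ k + 3 ^ k := by
        show (∑ j ∈ Finset.range 4, (j : ℤ) ^ k) = 1 + 2 ^ k + 3 ^ k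
        rw [Finset.sum_range_succ, Finset.sum_range_succ, Finset.sum_range_succ,
          Finset.sum_range_one]
        norm_num [zero_pow (show k ≠ 0 by omega)]
      rw [hsum]
      have h2 : (2:ℤ) ^ k ≡ 0 [ZMOD 4] := by
        obtain ⟨k', rfl⟩ : ∃ k', k = k' + 2 := ⟨k - 2, by omega⟩
        exact Int.modEq_zero_iff_dvd.2 ⟨2 ^ k', by ring⟩
      have h3 : (3:ℤ) ^ k ≡ 1 [ZMOD 4] := by
        obtain ⟨c, rfl⟩ := hek
        have h9 : (3:ℤ) ^ (c + c) = 9 ^ c := by rw [pow_add, ← mul_pow]; norm_num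
        rw [h9]
        calc (9:ℤ) ^ c ≡ 1 ^ c [ZMOD 4] := Int.ModEq.pow c (by decide)
          _ = 1 := one_pow c
      have hh : (1:ℤ) + 2 ^ k + 3 ^ k ≡ 1 + 0 + 1 [ZMOD 4] :=
        Int.ModEq.add (Int.ModEq.add_left 1 h2) h3
      have h4 : ((2:ℤ)^2 : ℤ) = 4 := by norm_num
      calc (1:ℤ) + 2 ^ k + 3 ^ k ≡ 1 + 0 + 1 [ZMOD (2:ℤ)^2] := by rw [h4]; exact hh
        _ = 2 ^ (2 - 1) := by norm_num
    · -- inductive step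
      have IH := ih hm2
      have hsplit : (∑ j ∈ Finset.range (2 ^ (m+1)), (j : ℤ) ^ k) =
          (∑ j ∈ Finset.range (2 ^ m), (j : ℤ) ^ k) +
          (∑ j ∈ Finset.range (2 ^ m), ((2 ^ m + j : ℕ) : ℤ) ^ k) := by
        have h1 : 2 ^ (m+1) = 2 ^ m + 2 ^ m := by ring
        rw [h1, Finset.sum_range_add]
      -- each shifted term is congruent to the unshifted one mod 2^(m+1)
      have hterm : ∀ j : ℕ, ((2 ^ m + j : ℕ) : ℤ) ^ k ≡ (j:ℤ) ^ k [ZMOD (2:ℤ) ^ (m+1)] := by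
        intro j
        obtain ⟨k', rfl⟩ : ∃ k', k = k' + 1 := ⟨k - 1, by omega⟩
        have h := modsq ((2:ℤ)^m) (j:ℤ) k'
        have hdvd : ((2:ℤ) ^ (m+1)) ∣ ((2:ℤ)^m) ^ 2 := by
          rw [← pow_mul]
          exact pow_dvd_pow 2 (by omega)
        have h1 : ((j:ℤ) + 2^m) ^ (k'+1) ≡ (j:ℤ)^(k'+1) + (k'+1) * 2^m * (j:ℤ)^k'
            [ZMOD (2:ℤ)^(m+1)] := Int.ModEq.of_dvd hdvd h
        have h2 : (j:ℤ)^(k'+1) + ((k':ℤ)+1) * 2^m * (j:ℤ)^k' ≡ (j:ℤ)^(k'+1) + 0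
            [ZMOD (2:ℤ)^(m+1)] := by
          apply Int.ModEq.add_left
          obtain ⟨c, hc⟩ := hek
          refine Int.modEq_zero_iff_dvd.2 ⟨c * (j:ℤ)^k', ?_⟩
          have hc' : ((k':ℤ) + 1) = 2 * c := by omega
          rw [hc', pow_succ]
          ring
        calc ((2 ^ m + j : ℕ) : ℤ) ^ (k'+1) = ((j:ℤ) + 2^m) ^ (k'+1) := by push_cast; ring
          _ ≡ (j:ℤ)^(k'+1) + (k'+1) * 2^m * (j:ℤ)^k' [ZMOD (2:ℤ)^(m+1)] := h1
          _ ≡ (j:ℤ)^(k'+1) + 0 [ZMOD (2:ℤ)^(m+1)] := h2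
          _ = (j:ℤ)^(k'+1) := by ring
      have hsum2 : (∑ j ∈ Finset.range (2 ^ m), ((2 ^ m + j : ℕ) : ℤ) ^ k) ≡
          (∑ j ∈ Finset.range (2 ^ m), (j : ℤ) ^ k) [ZMOD (2:ℤ) ^ (m+1)] := by
        rw [Int.modEq_iff_dvd]
        rw [← Finset.sum_sub_distrib]
        apply Finset.dvd_sum
        intro j _
        exact (Int.modEq_iff_dvd.1 (hterm j))
      -- combine
      have hdouble : (2:ℤ) * (∑ j ∈ Finset.range (2 ^ m), (j : ℤ) ^ k) ≡ 2 ^ m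
          [ZMOD (2:ℤ) ^ (m+1)] := by
        rw [Int.modEq_iff_dvd] at IH ⊢
        obtain ⟨t, ht⟩ := IH
        refine ⟨t, ?_⟩
        have hmm : (2:ℤ) ^ m = 2 * 2 ^ (m-1) := by
          rw [← pow_succ']
          congr 1
          omega
        rw [pow_succ']
        rw [hmm] at ht ⊢
        linarith [ht]
      calc (∑ j ∈ Finset.range (2 ^ (m+1)), (j : ℤ) ^ k)
          = (∑ j ∈ Finset.range (2 ^ m), (j : ℤ) ^ k) +
            (∑ j ∈ Finset.range (2 ^ m), ((2 ^ m + j : ℕ) : ℤ) ^ k) := hsplit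
        _ ≡ (∑ j ∈ Finset.range (2 ^ m), (j : ℤ) ^ k) +
            (∑ j ∈ Finset.range (2 ^ m), (j : ℤ) ^ k) [ZMOD (2:ℤ) ^ (m+1)] :=
          Int.ModEq.add_left _ hsum2
        _ = 2 * (∑ j ∈ Finset.range (2 ^ m), (j : ℤ) ^ k) := by ring
        _ ≡ 2 ^ m [ZMOD (2:ℤ) ^ (m+1)] := hdouble
        _ = 2 ^ ((m+1) - 1) := by congr 1

lemma vtwo : padicValRat 2 (2:ℚ) = 1 := by
  have h : ((2:ℕ):ℚ) = (2:ℚ) := by norm_num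
  rw [← h, padicValRat.of_nat]
  norm_num [padicValNat.self (by norm_num : 1 < 2)]

lemma vhalf : padicValRat 2 (-1/2 : ℚ) = -1 := by
  have h : (-1/2 : ℚ) = -((2:ℚ)⁻¹) := by norm_num
  rw [h, padicValRat.neg, padicValRat.inv, vtwo]

lemma val_sum_ge (s : Finset ℕ) (f : ℕ → ℚ)
    (h : ∀ i ∈ s, f i = 0 ∨ (1:ℤ) ≤ padicValRat 2 (f i)) :
    (∑ i ∈ s, f i) = 0 ∨ (1:ℤ) ≤ padicValRat 2 (∑ i ∈ s, f i) := by
  classical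
  induction s using Finset.induction_on with
  | empty => left; simp
  | @insert a s ha ih =>
    rw [Finset.sum_insert ha]
    have hfa := h a (Finset.mem_insert_self a s)
    have hrest := ih (fun i hi => h i (Finset.mem_insert_of_mem hi))
    rcases hfa with hfa | hfa
    · rw [hfa, zero_add]; exact hrest
    · rcases hrest with hrest | hrest
      · rw [hrest, add_zero]; right; exact hfa
      · by_cases hz : f a + ∑ i ∈ s, f i = 0
        · left; exact hz
        · right
          calc (1:ℤ) ≤ min (padicValRat 2 (f a)) (padicValRat 2 (∑ i ∈ s, f i)) :=
                le_min hfa hrest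
            _ ≤ padicValRat 2 (f a + ∑ i ∈ s, f i) := padicValRat.min_le_padicValRat_add hz

theorem bern_two_val : ∀ k : ℕ, 2 ≤ k → Even k → padicValRat 2 (_root_.bernoulli k) = -1 := by
  intro k
  induction k using Nat.strong_induction_on with
  | _ k IH =>
    intro hk2 hek
    -- valuations of earlier _root_.bernoulli numbers
    have hge : ∀ i, i < k → _root_.bernoulli i ≠ 0 → (-1:ℤ) ≤ padicValRat 2 (_root_.bernoulli i) := by
      intro i hik hbz
      match i with
      | 0 => rw [_root_.bernoulli_zero]; simp
      | 1 => rw [_root_.bernoulli_one, vhalf]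
      | (j+2) =>
        rcases Nat.even_or_odd (j+2) with hev | hod
        · rw [IH _ hik (by omega) hev]
        · exfalso
          apply hbz
          rw [_root_.bernoulli_eq_bernoulli'_of_ne_one (by omega)]
          exact bernoulli'_eq_zero_of_odd hod (by omega)
    set m : ℕ := padicValNat 2 (k+1) + 2 with hm
    have hm2 : 2 ≤ m := by omega
    set Tn : ℕ := ∑ j ∈ Finset.range (2^m), j ^ k with hTdef
    -- congruence fact
    have f1 : (Tn:ℤ) ≡ 2 ^ (m-1) [ZMOD (2:ℤ)^m] := by
      have := Tcong k hk2 hek m hm2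
      have hcast : (∑ j ∈ Finset.range (2 ^ m), (j : ℤ) ^ k) = (Tn:ℤ) := by
        rw [hTdef]; push_cast; ring
      rwa [hcast] at this
    have h2 : (Tn:ℤ) % ((2:ℤ)^m) = (2:ℤ)^(m-1) := by
      have hlt : (2:ℤ)^(m-1) < (2:ℤ)^m := by
        apply pow_lt_pow_right₀ (by norm_num) (by omega)
      have := f1
      rw [Int.ModEq] at this
      rw [this, Int.emod_eq_of_lt (by positivity) hlt]
    have hnat : Tn % 2^m = 2^(m-1) := by
      have hc : ((Tn % 2^m : ℕ) : ℤ) = (2:ℤ)^(m-1) := by push_cast; exact h2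
      exact_mod_cast hc
    -- Tn = 2^(m-1) * odd
    obtain ⟨q, hq⟩ : ∃ q, Tn = 2^(m-1) * (2*q+1) := by
      have hd := Nat.div_add_mod Tn (2^m)
      rw [hnat] at hd
      have hpow : (2:ℕ)^m = 2^(m-1) * 2 := by
        conv_lhs => rw [show m = (m-1)+1 by omega]
        rw [pow_succ]
      obtain ⟨a, ha⟩ : ∃ a, Tn = 2^m * a + 2^(m-1) := ⟨Tn / 2^m, hd.symm⟩
      exact ⟨a, by rw [ha, hpow]; ring⟩
    have hTn0 : Tn ≠ 0 := by
      rw [hq]; positivity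
    have f3 : padicValNat 2 Tn = m - 1 := by
      rw [hq, padicValNat.mul (by positivity) (by omega)]
      rw [padicValNat.prime_pow]
      have : padicValNat 2 (2*q+1) = 0 := padicValNat.eq_zero_of_not_dvd (by omega)
      omega
    -- the equation from Faulhaber
    set h : ℕ → ℚ :=
      fun i => _root_.bernoulli i * ((k+1).choose i : ℚ) * (2:ℚ)^(m*(k-i)) / ((k:ℚ)+1) with hh
    have h2m : ((2:ℚ))^m ≠ 0 := by positivity
    have hk1 : ((k:ℚ)+1) ≠ 0 := by positivity
    have key : (Tn:ℚ) = (∑ i ∈ Finset.range k, h i) * (2:ℚ)^m + _root_.bernoulli k * (2:ℚ)^m := by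
      have hfaul := sum_range_pow (2^m) k
      have hlhs : (∑ j ∈ Finset.range (2 ^ m), (j : ℚ) ^ k) = (Tn:ℚ) := by
        rw [hTdef]; push_cast; ring
      rw [hlhs, Finset.sum_range_succ] at hfaul
      have hlast : _root_.bernoulli k * ((k + 1).choose k : ℚ) * ((2^m : ℕ) : ℚ) ^ (k + 1 - k) / (k+1)
          = _root_.bernoulli k * (2:ℚ)^m := by
        rw [Nat.choose_succ_self_right]
        have he : k + 1 - k = 1 := by omega
        rw [he, pow_one]
        push_cast
        rw [div_eq_iff hk1]
        ring
      rw [hfaul, hlast]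
      congr 1
      rw [Finset.sum_mul]
      apply Finset.sum_congr rfl
      intro i hi
      rw [Finset.mem_range] at hi
      have hexp : ((2^m : ℕ) : ℚ) ^ (k + 1 - i) = (2:ℚ)^(m*(k-i)) * (2:ℚ)^m := by
        push_cast
        rw [← pow_mul, ← pow_add]
        congr 1
        have h1 : k + 1 - i = (k - i) + 1 := by omega
        rw [h1, Nat.mul_add, Nat.mul_one]
      rw [hexp]
      simp only [hh]
      ring
    have hbk : _root_.bernoulli k = (Tn:ℚ)/(2:ℚ)^m - ∑ i ∈ Finset.range k, h i := by
      rw [eq_sub_iff_add_eq, eq_div_iff h2m, add_mul]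
      linarith [key]
    -- valuation of X
    have hX0 : (Tn:ℚ)/(2:ℚ)^m ≠ 0 := by
      apply div_ne_zero _ h2m
      exact_mod_cast hTn0
    have hXval : padicValRat 2 ((Tn:ℚ)/(2:ℚ)^m) = -1 := by
      rw [padicValRat.div (by exact_mod_cast hTn0) h2m,
        padicValRat.of_nat, f3, padicValRat.pow, vtwo, mul_one]
      omega
    -- valuation of the sum terms
    have hterm : ∀ i ∈ Finset.range k, h i = 0 ∨ (1:ℤ) ≤ padicValRat 2 (h i) := by
      intro i hi
      rw [Finset.mem_range] at hi
      by_cases hbz : _root_.bernoulli i = 0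
      · left; rw [hh]; simp [hbz]
      · right
        have hch : ((k+1).choose i : ℚ) ≠ 0 := by
          have := Nat.choose_pos (show i ≤ k+1 by omega)
          positivity
        have hpw : ((2:ℚ))^(m*(k-i)) ≠ 0 := by positivity
        simp only [hh]
        rw [padicValRat.div (by exact mul_ne_zero (mul_ne_zero hbz hch) hpw) hk1,
          padicValRat.mul (mul_ne_zero hbz hch) hpw,
          padicValRat.mul hbz hch,
          padicValRat.pow, vtwo]
        have hb := hge i hi hbz
        have hcast : ((k:ℚ)+1) = (((k+1:ℕ)):ℚ) := by push_cast; ring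
        rw [hcast]
        simp only [padicValRat.of_nat]
        have hmk : m * (k - i) ≥ m := Nat.le_mul_of_pos_right m (by omega)
        have hval : padicValNat 2 (k+1) = m - 2 := by omega
        rw [hval]
        omega
    rcases val_sum_ge (Finset.range k) h hterm with hS | hS
    · rw [hbk, hS, sub_zero, hXval]
    · have hSne : (∑ i ∈ Finset.range k, h i) ≠ 0 := by
        intro hzz
        rw [hzz] at hS
        simp at hS
      have hne : (Tn:ℚ)/(2:ℚ)^m - ∑ i ∈ Finset.range k, h i ≠ 0 := by
        intro hzz
        have : (Tn:ℚ)/(2:ℚ)^m = ∑ i ∈ Finset.range k, h i := by linarith [sub_eq_zero.mp hzz]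
        rw [← this] at hS
        omega
      rw [hbk, sub_eq_add_neg]
      rw [padicValRat.add_eq_min (by rwa [← sub_eq_add_neg]) hX0 (by simpa using hSne)
        (by rw [padicValRat.neg, hXval]; omega)]
      rw [padicValRat.neg, hXval]
      have : min (-1:ℤ) (padicValRat 2 (∑ i ∈ Finset.range k, h i)) = -1 := by omega
      exact this

/-- Lucas-style: choose m (2^t) is odd iff bit t of m is set -/
lemma lucas_pow : ∀ (t m : ℕ), Nat.choose m (2^t) % 2 = (m / 2^t) % 2 := by
  intro t
  induction t with
  | zero =>
    intro m
    simp [Nat.choose_one_right]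
  | succ t ih =>
    intro m
    have hl := Choose.choose_modEq_choose_mod_mul_choose_div_nat (p := 2) (n := m)
      (k := 2^(t+1))
    have hp2 : (2:ℕ)^(t+1) = 2^t * 2 := pow_succ 2 t
    have h1 : 2^(t+1) % 2 = 0 := by rw [hp2]; simp
    have h2 : 2^(t+1) / 2 = 2^t := by rw [hp2]; simp
    rw [h1, h2, Nat.choose_zero_right, one_mul] at hl
    rw [Nat.ModEq] at hl
    rw [hl, ih (m/2), Nat.div_div_eq_div_mul]
    congr 2
    rw [hp2]
    ring
/-- valuation facts for bernoulli' -/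
lemma bval' (k : ℕ) (hk : 2 ≤ k) (he : Even k) :
    padicValRat 2 (bernoulli' k) = -1 ∧ bernoulli' k ≠ 0 := by
  have h1 : _root_.bernoulli k = bernoulli' k := _root_.bernoulli_eq_bernoulli'_of_ne_one (by omega)
  have h2 := bern_two_val k hk he
  rw [h1] at h2
  refine ⟨h2, fun hz => ?_⟩
  rw [hz] at h2
  simp at h2

/-- the denominator of bernoulli' has 2-adic valuation at most 1 -/
lemma bden (i : ℕ) : padicValNat 2 (bernoulli' i).den ≤ 1 := by
  match i with
  | 0 => simp [bernoulli'_zero]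
  | 1 =>
    rw [bernoulli'_one]
    have hv : padicValRat 2 ((1:ℚ)/2) = -1 := by
      have h : ((1:ℚ)/2) = ((2:ℚ))⁻¹ := by norm_num
      rw [h, padicValRat.inv, vtwo]
    have := den2_eq ((1:ℚ)/2) (by norm_num) (by rw [hv]; norm_num)
    rw [hv] at this
    omega
  | (j+2) =>
    rcases Nat.even_or_odd (j+2) with hev | hod
    · obtain ⟨hv, hnz⟩ := bval' (j+2) (by omega) hev
      have := den2_eq _ hnz (by rw [hv]; norm_num)
      rw [hv] at this
      omega
    · rw [bernoulli'_eq_zero_of_odd hod (by omega)]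
      simp

/-- 2-adic valuation of a finset lcm is bounded by bounds on the parts -/
lemma pv_lcm_le (s : Finset ℕ) (f : ℕ → ℕ) (r : ℕ) (h0 : ∀ i ∈ s, f i ≠ 0)
    (h : ∀ i ∈ s, padicValNat 2 (f i) ≤ r) : padicValNat 2 (s.lcm f) ≤ r := by
  classical
  induction s using Finset.induction_on with
  | empty => simp
  | @insert a s ha ih =>
    rw [Finset.lcm_insert]
    have ih' := ih (fun i hi => h0 i (Finset.mem_insert_of_mem hi))
      (fun i hi => h i (Finset.mem_insert_of_mem hi))
    have hfa0 : f a ≠ 0 := h0 a (Finset.mem_insert_self a s)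
    have hl0 : s.lcm f ≠ 0 := by
      rw [Ne, Finset.lcm_eq_zero_iff]
      rintro ⟨i, hi, hfi⟩
      exact h0 i (Finset.mem_insert_of_mem hi) hfi
    rw [lcm_eq_nat_lcm]
    have hfact := Nat.factorization_lcm hfa0 hl0
    have hv : padicValNat 2 (Nat.lcm (f a) (s.lcm f)) =
        max (padicValNat 2 (f a)) (padicValNat 2 (s.lcm f)) := by
      have := congrArg (fun g => g 2) hfact
      simp only [Finsupp.sup_apply] at this
      rw [Nat.factorization_def _ Nat.prime_two, Nat.factorization_def _ Nat.prime_two,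
        Nat.factorization_def _ Nat.prime_two] at this
      exact this
    rw [hv]
    exact max_le (h a (Finset.mem_insert_self a s)) ih'

theorem stmt4 (n : ℕ) (P : Polynomial ℚ) (d : ℕ)
    (hP : evalPS n P) (hd : isDenom P d) :
    Odd (d / (n + 1)) ↔ ∃ r : ℕ, n = 2 ^ r - 1 := by
  obtain ⟨hd0, hdint, hdmin⟩ := hd
  rcases Nat.eq_zero_or_pos n with hn0 | hn1
  · -- n = 0 : P = X + 1, d = 1
    subst hn0
    have hP1 : P = Polynomial.X + 1 := by
      apply Polynomial.eq_of_infinite_eval_eq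
      apply Set.Infinite.mono _
        (Set.infinite_range_of_injective (f := (Nat.cast : ℕ → ℚ)) Nat.cast_injective)
      rintro _ ⟨x, rfl⟩
      simp only [Set.mem_setOf_eq]
      rw [hP x]
      simp
    have hd1 : d = 1 := by
      have hle := hdmin 1 one_pos ?_
      · omega
      · intro i
        rw [Nat.cast_one, one_smul, hP1]
        by_cases h0 : i = 0
        · subst h0; exact ⟨1, by simp⟩
        · by_cases h1 : i = 1
          · subst h1; exact ⟨1, by simp [Polynomial.coeff_one]⟩
          · refine ⟨0, ?_⟩
            simp only [Polynomial.coeff_add, Polynomial.coeff_X, Polynomial.coeff_one]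
            rw [if_neg (by omega), if_neg (by omega)]
            norm_num
    rw [hd1]
    have hone : (1:ℕ) / (0+1) = 1 := by norm_num
    rw [hone]
    constructor
    · intro _; exact ⟨0, by norm_num⟩
    · intro _; exact odd_one
  · -- n ≥ 1
    set c : ℕ → ℚ := fun i => bernoulli' i * ((n+1).choose i : ℚ) / ((n:ℚ)+1) with hc
    set Q : Polynomial ℚ :=
      ∑ i ∈ Finset.range (n+1), Polynomial.C (c i) * Polynomial.X^(n+1-i) with hQ
    have hn1Q : ((n:ℚ)+1) ≠ 0 := by positivity
    have hQeval : ∀ x : ℕ, Q.eval (x:ℚ) = ∑ k ∈ Finset.range (x+1), (k:ℚ)^n := by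
      intro x
      have hfa := sum_Ico_pow x n
      have hlhs : (∑ k ∈ Finset.range (x+1), (k:ℚ)^n) = ∑ k ∈ Finset.Ico 1 (x+1), (k:ℚ)^n := by
        rw [Finset.range_eq_Ico,
          Finset.sum_eq_sum_Ico_succ_bot (show 0 < x + 1 by omega) (fun k => (k:ℚ)^n)]
        simp [zero_pow (show n ≠ 0 by omega)]
      rw [hlhs, hfa, hQ]
      rw [Polynomial.eval_finset_sum]
      apply Finset.sum_congr rfl
      intro i hi
      rw [Polynomial.eval_mul, Polynomial.eval_C, Polynomial.eval_pow, Polynomial.eval_X]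
      simp only [hc]
      ring
    have hPQ : P = Q := by
      apply Polynomial.eq_of_infinite_eval_eq
      apply Set.Infinite.mono _
        (Set.infinite_range_of_injective (f := (Nat.cast : ℕ → ℚ)) Nat.cast_injective)
      rintro _ ⟨x, rfl⟩
      simp only [Set.mem_setOf_eq]
      rw [hP x, hQeval x]
    have hcoeff : ∀ j, Q.coeff j = if 1 ≤ j ∧ j ≤ n+1 then c (n+1-j) else 0 := by
      intro j
      rw [hQ, Polynomial.finset_sum_coeff]
      simp only [Polynomial.coeff_C_mul, Polynomial.coeff_X_pow]
      split_ifs with hcond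
      · rw [Finset.sum_eq_single (n+1-j)]
        · rw [if_pos (by omega : j = n+1-(n+1-j)), mul_one]
        · intro b hb hbne
          rw [Finset.mem_range] at hb
          rw [if_neg (by omega), mul_zero]
        · intro habs
          exact absurd (Finset.mem_range.2 (by omega)) habs
      · apply Finset.sum_eq_zero
        intro i hi
        rw [Finset.mem_range] at hi
        rw [if_neg (by omega), mul_zero]
    have hdvd : ∀ i, i ≤ n → (c i).den ∣ d := by
      intro i hi
      have h1 := hdint (n+1-i)
      rw [Polynomial.coeff_smul, hPQ, hcoeff (n+1-i), if_pos (by omega)] at h1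
      have heq : n+1-(n+1-i) = i := by omega
      rw [heq, smul_eq_mul] at h1
      exact (int_mul_iff (c i) d hd0).1 h1
    have hc0val : c 0 = ((n+1:ℕ):ℚ)⁻¹ := by
      simp only [hc]
      rw [bernoulli'_zero, Nat.choose_zero_right]
      push_cast
      ring
    have hden0 : (c 0).den = n+1 := by
      rw [hc0val, Rat.inv_natCast_den_of_pos (by omega)]
    have hnd : (n+1) ∣ d := by rw [← hden0]; exact hdvd 0 (by omega)
    obtain ⟨qd, hqd⟩ := hnd
    have hqd' : d / (n+1) = qd := by
      rw [hqd]; exact Nat.mul_div_cancel_left qd (by omega)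
    have hqd0 : qd ≠ 0 := by rintro rfl; omega
    by_cases hpow : ∃ r, n + 1 = 2^r
    · obtain ⟨r, hr⟩ := hpow
      have hr1 : 1 ≤ r := by
        by_contra h0
        have : r = 0 := by omega
        rw [this] at hr
        norm_num at hr
        omega
      set L := (Finset.range (n+2)).lcm (fun j => (Q.coeff j).den) with hL
      have hL0 : L ≠ 0 := by
        rw [hL, Ne, Finset.lcm_eq_zero_iff]
        rintro ⟨j, hj, hzero⟩
        exact Rat.den_nz _ hzero
      have hLd : L ∣ d := by
        rw [hL]
        apply Finset.lcm_dvd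
        intro j hj
        rw [Finset.mem_range] at hj
        rw [hcoeff j]
        split_ifs with hcond
        · exact hdvd (n+1-j) (by omega)
        · simp
      have hdL : d ≤ L := by
        apply hdmin L (Nat.pos_of_ne_zero hL0)
        intro j
        rw [Polynomial.coeff_smul, hPQ, smul_eq_mul]
        apply (int_mul_iff _ L (Nat.pos_of_ne_zero hL0)).2
        by_cases hj : j ≤ n+1
        · rw [hL]
          exact Finset.dvd_lcm (Finset.mem_range.2 (by omega))
        · rw [hcoeff j, if_neg (by omega)]
          simp
      have hdl : d = L := le_antisymm hdL (Nat.le_of_dvd hd0 hLd)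
      have hvL : padicValNat 2 L ≤ r := by
        rw [hL]
        apply pv_lcm_le _ _ r (fun j _ => Rat.den_nz _)
        intro j hj
        rw [hcoeff j]
        split_ifs with hcond
        · rcases Nat.eq_zero_or_pos (n+1-j) with hi0 | hip
          · rw [hi0, hden0, hr, padicValNat.prime_pow]
          · have hin : n+1-j ≤ n := by omega
            set i := n+1-j with hidef
            have hiden : (c i).den ∣ (bernoulli' i).den * i := by
              have hident : c i = bernoulli' i * ((n.choose (i-1) : ℚ) / (i:ℚ)) := by
                simp only [hc]
                rw [mul_div_assoc]
                congr 1
                have hnat : (n+1) * (n.choose (i-1)) = ((n+1).choose i) * i := by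
                  have h0 := Nat.add_one_mul_choose_eq n (i-1)
                  have heq2 : i - 1 + 1 = i := by omega
                  rw [heq2] at h0
                  exact h0
                rw [div_eq_div_iff hn1Q (by positivity : (i:ℚ) ≠ 0)]
                have hnat' : ((n+1).choose i) * i = n.choose (i-1) * (n+1) := by
                  rw [← hnat]; ring
                exact_mod_cast hnat'
              rw [hident]
              refine dvd_trans (Rat.mul_den_dvd _ _) ?_
              apply mul_dvd_mul_left
              have hrepr : ((n.choose (i-1) : ℚ) / (i:ℚ)) =
                  Rat.divInt (n.choose (i-1) : ℤ) (i : ℤ) := by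
                rw [Rat.divInt_eq_div]
                push_cast
                ring
              rw [hrepr]
              exact_mod_cast Rat.den_dvd ((n.choose (i-1)) : ℤ) (i:ℤ)
            calc padicValNat 2 (c i).den
                ≤ padicValNat 2 ((bernoulli' i).den * i) :=
                  pv_le_of_dvd (Nat.mul_ne_zero (Rat.den_nz _) (by omega)) hiden
              _ = padicValNat 2 (bernoulli' i).den + padicValNat 2 i :=
                  padicValNat.mul (Rat.den_nz _) (by omega)
              _ ≤ 1 + (r-1) := add_le_add (bden i) (pv_le_of_lt_pow (by omega) (by omega))
              _ ≤ r := by omega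
        · simp
      have hvd : padicValNat 2 d ≤ r := by rw [hdl]; exact hvL
      have hodd : Odd qd := by
        rw [Nat.odd_iff]
        by_contra hev
        have h2q : 2 ∣ qd := by omega
        obtain ⟨s, hs⟩ := h2q
        have hdd : 2^(r+1) ∣ d := by
          rw [hqd, hr, hs]
          exact ⟨s, by ring⟩
        rcases (padicValNat_dvd_iff _ _).1 hdd with h0 | hle
        · omega
        · omega
      rw [hqd']
      constructor
      · intro _; exact ⟨r, by omega⟩
      · intro _; exact hodd
    · have hRfalse : ¬∃ r, n = 2^r - 1 := by
        rintro ⟨r, hrr⟩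
        apply hpow
        refine ⟨r, ?_⟩
        have h1 : 0 < 2^r := pow_pos (by norm_num) r
        omega
      set t := Nat.log 2 (n+1) with ht
      have h2t : 2^t ≤ n+1 := Nat.pow_log_le_self 2 (by omega)
      have hlt : n+1 < 2^(t+1) := Nat.lt_pow_succ_log_self (by norm_num) (n+1)
      have ht1 : 1 ≤ t := by
        by_contra h0
        have ht0 : t = 0 := by omega
        rw [ht0] at hlt
        norm_num at hlt
        omega
      have htne : 2^t ≠ n+1 := fun h => hpow ⟨t, h.symm⟩
      have hti : 2^t ≤ n := by omega
      have hdiv1 : (n+1)/2^t = 1 := by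
        apply Nat.div_eq_of_lt_le (by omega)
        have hp : (2:ℕ)^(t+1) = 2*2^t := by rw [pow_succ]; ring
        omega
      have hchodd : ((n+1).choose (2^t)) % 2 = 1 := by rw [lucas_pow, hdiv1]
      have hch0 : padicValNat 2 ((n+1).choose (2^t)) = 0 :=
        padicValNat.eq_zero_of_not_dvd (by omega)
      have hchne : ((n+1).choose (2^t)) ≠ 0 := by omega
      have hteven : Even (2^t) := by
        refine ⟨2^(t-1), ?_⟩
        have hp : (2:ℕ)^t = 2^(t-1)*2 := by
          conv_lhs => rw [show t = (t-1)+1 by omega]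
          rw [pow_succ]
        omega
      have h2le : 2 ≤ 2^t := by
        have : (2:ℕ)^1 ≤ 2^t := Nat.pow_le_pow_right (by norm_num) ht1
        omega
      obtain ⟨hbv, hbnz⟩ := bval' (2^t) h2le hteven
      set v := padicValNat 2 (n+1) with hv
      have hcval : padicValRat 2 (c (2^t)) = -1 - v := by
        simp only [hc]
        have hcast : ((n:ℚ)+1) = (((n+1:ℕ)):ℚ) := by push_cast; ring
        rw [hcast]
        rw [padicValRat.div (mul_ne_zero hbnz (by exact_mod_cast hchne))
          (Nat.cast_ne_zero.2 (by omega)),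
          padicValRat.mul hbnz (by exact_mod_cast hchne), hbv]
        simp only [padicValRat.of_nat]
        rw [hch0, ← hv]
        push_cast
        ring
      have hcne : c (2^t) ≠ 0 := by
        intro hz
        rw [hz] at hcval
        simp at hcval
        omega
      have hcden : (padicValNat 2 (c (2^t)).den : ℤ) = v + 1 := by
        have hh := den2_eq _ hcne (by rw [hcval]; omega)
        rw [hcval] at hh
        omega
      have hdvd2 : 2^(v+1) ∣ (c (2^t)).den := by
        have hh : v+1 ≤ padicValNat 2 (c (2^t)).den := by omega
        exact (padicValNat_dvd_iff _ _).2 (Or.inr hh)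
      have hdvd2d : 2^(v+1) ∣ d := dvd_trans hdvd2 (hdvd (2^t) hti)
      have hqdeven : ¬ Odd qd := by
        intro hoddq
        have hq2 : padicValNat 2 qd = 0 := by
          apply padicValNat.eq_zero_of_not_dvd
          rw [Nat.odd_iff] at hoddq
          omega
        have hvd : padicValNat 2 d = v := by
          rw [hqd, padicValNat.mul (by omega) hqd0, hq2, ← hv]
          omega
        rcases (padicValNat_dvd_iff _ _).1 hdvd2d with h0 | hle
        · omega
        · omega
      rw [hqd']
      constructor
      · intro h; exact absurd h hqdeven
      · intro h; exact absurd h hRfalse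
end

section
/- If a prime p divides the power-sum denominator d_n, then p ≤ n+1. -/
open Polynomial Finset

/-- Coefficient of the shifted polynomial, under a degree bound. -/
lemma taylor_coeff_of_natDegree_le (P : Polynomial ℚ) (k : ℕ) (h : P.natDegree ≤ k + 1) :
    (Polynomial.taylor 1 P).coeff k = P.coeff k + (k + 1) * P.coeff (k + 1) := by
  rw [Polynomial.taylor_coeff]
  have hd : (Polynomial.hasseDeriv k P).natDegree < 2 := by
    have := Polynomial.natDegree_hasseDeriv_le P k
    omega
  rw [Polynomial.eval_eq_sum_range' hd]
  simp only [Finset.sum_range_succ, Finset.sum_range_zero, Polynomial.hasseDeriv_coeff]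
  rw [show 0 + k = k from by omega, show 1 + k = k + 1 from by omega,
    Nat.choose_self, Nat.choose_succ_self_right]
  push_cast
  ring

/-- The finite difference operator lowers degree. -/
lemma delta_natDegree_le (P : Polynomial ℚ) (m : ℕ) (h : P.natDegree ≤ m + 1) :
    (Polynomial.taylor 1 P - P).natDegree ≤ m := by
  rw [Polynomial.natDegree_le_iff_coeff_eq_zero]
  intro k hk
  have h1 : P.natDegree ≤ k + 1 := by omega
  have h2 : P.coeff (k + 1) = 0 :=
    Polynomial.coeff_eq_zero_of_natDegree_lt (by omega)
  rw [Polynomial.coeff_sub, taylor_coeff_of_natDegree_le P k h1, h2]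
  ring

/-- Top-degree coefficient of the finite difference. -/
lemma delta_coeff_top (P : Polynomial ℚ) (m : ℕ) (h : P.natDegree ≤ m + 1) :
    (Polynomial.taylor 1 P - P).coeff m = (m + 1) * P.coeff (m + 1) := by
  rw [Polynomial.coeff_sub, taylor_coeff_of_natDegree_le P m h]
  ring

/-- The finite difference of an integer-valued polynomial is integer valued. -/
lemma delta_intValued (P : Polynomial ℚ) (hval : ∀ x : ℕ, ∃ z : ℤ, P.eval (x : ℚ) = z) :
    ∀ x : ℕ, ∃ z : ℤ, (Polynomial.taylor 1 P - P).eval (x : ℚ) = z := by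
  intro x
  obtain ⟨z1, hz1⟩ := hval (x + 1)
  obtain ⟨z2, hz2⟩ := hval x
  refine ⟨z1 - z2, ?_⟩
  rw [Polynomial.eval_sub, Polynomial.taylor_apply, Polynomial.eval_comp]
  simp only [Polynomial.eval_add, Polynomial.eval_X, Polynomial.eval_C]
  push_cast at hz1 ⊢
  rw [hz1, hz2]

/-- For an integer-valued polynomial of degree at most `N`, `N!` times the
`N`-th coefficient is an integer. -/
lemma factorial_mul_top_coeff : ∀ N : ℕ, ∀ P : Polynomial ℚ, P.natDegree ≤ N →
    (∀ x : ℕ, ∃ z : ℤ, P.eval (x : ℚ) = z) →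
    ∃ z : ℤ, (N.factorial : ℚ) * P.coeff N = z := by
  intro N
  induction N with
  | zero =>
    intro P _ hval
    obtain ⟨z, hz⟩ := hval 0
    refine ⟨z, ?_⟩
    rw [Nat.factorial_zero, Nat.cast_one, one_mul, Polynomial.coeff_zero_eq_eval_zero]
    simpa using hz
  | succ N ih =>
    intro P hdeg hval
    obtain ⟨z, hz⟩ := ih (Polynomial.taylor 1 P - P) (delta_natDegree_le P N hdeg)
      (delta_intValued P hval)
    refine ⟨z, ?_⟩
    rw [delta_coeff_top P N hdeg] at hz
    rw [Nat.factorial_succ]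
    push_cast at hz ⊢
    linarith [hz]

/-- For an integer-valued polynomial of degree at most `N`, `N! • P` has integer
coefficients. -/
lemma factorial_smul_int : ∀ N : ℕ, ∀ P : Polynomial ℚ, P.natDegree ≤ N →
    (∀ x : ℕ, ∃ z : ℤ, P.eval (x : ℚ) = z) →
    ∀ i, ∃ z : ℤ, (N.factorial : ℚ) * P.coeff i = z := by
  intro N
  induction N with
  | zero =>
    intro P hdeg hval i
    rcases Nat.eq_zero_or_pos i with hi | hi
    · subst hi
      exact factorial_mul_top_coeff 0 P hdeg hval
    · refine ⟨0, ?_⟩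
      rw [Polynomial.coeff_eq_zero_of_natDegree_lt (by omega)]
      simp
  | succ N ih =>
    intro P hdeg hval i
    set a : ℚ := P.coeff (N + 1) with ha
    set G : Polynomial ℚ := descPochhammer ℚ (N + 1) with hGdef
    obtain ⟨za, hza⟩ := factorial_mul_top_coeff (N + 1) P hdeg hval
    have hGmonic : G.Monic := monic_descPochhammer ℚ (N + 1)
    have hGdeg : G.natDegree = N + 1 := descPochhammer_natDegree ℚ (N + 1)
    -- coefficients of G are integers
    have hGcoeff : ∀ j, ∃ g : ℤ, G.coeff j = (g : ℚ) := by
      intro j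
      refine ⟨(descPochhammer ℤ (N + 1)).coeff j, ?_⟩
      rw [hGdef, ← descPochhammer_map (Int.castRingHom ℚ) (N + 1), Polynomial.coeff_map]
      rfl
    set Q : Polynomial ℚ := P - a • G with hQdef
    have hPQ : ∀ j, P.coeff j = Q.coeff j + a * G.coeff j := by
      intro j
      simp [hQdef, Polynomial.coeff_sub, Polynomial.coeff_smul, smul_eq_mul]
    have hQdeg : Q.natDegree ≤ N := by
      rw [Polynomial.natDegree_le_iff_coeff_eq_zero]
      intro k hk
      rcases eq_or_lt_of_le (show N + 1 ≤ k by omega) with hk1 | hk1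
      · subst hk1
        have : G.coeff (N + 1) = 1 := by
          have := hGmonic.coeff_natDegree
          rwa [hGdeg] at this
        simp [hQdef, Polynomial.coeff_sub, Polynomial.coeff_smul, smul_eq_mul, this, ← ha]
      · have h1 : P.coeff k = 0 := Polynomial.coeff_eq_zero_of_natDegree_lt (by omega)
        have h2 : G.coeff k = 0 := Polynomial.coeff_eq_zero_of_natDegree_lt (by omega)
        simp [hQdef, Polynomial.coeff_sub, Polynomial.coeff_smul, smul_eq_mul, h1, h2]
    have hQval : ∀ x : ℕ, ∃ z : ℤ, Q.eval (x : ℚ) = z := by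
      intro x
      obtain ⟨zp, hzp⟩ := hval x
      obtain ⟨m, hm⟩ := Nat.factorial_dvd_descFactorial x (N + 1)
      have hGx : G.eval (x : ℚ) = ((N + 1).factorial : ℚ) * (m : ℚ) := by
        rw [hGdef, descPochhammer_eval_eq_descFactorial ℚ x (N + 1), hm]
        push_cast
        ring
      refine ⟨zp - za * m, ?_⟩
      rw [hQdef]
      simp only [Polynomial.eval_sub, Polynomial.eval_smul, smul_eq_mul]
      rw [hzp, hGx]
      push_cast
      rw [← hza]
      ring
    obtain ⟨zq, hzq⟩ := ih Q hQdeg hQval i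
    obtain ⟨g, hg⟩ := hGcoeff i
    refine ⟨(N + 1) * zq + za * g, ?_⟩
    have key : ((N + 1).factorial : ℚ) * P.coeff i
        = ((N : ℚ) + 1) * ((N.factorial : ℚ) * Q.coeff i)
          + (((N + 1).factorial : ℚ) * a) * G.coeff i := by
      rw [hPQ i, Nat.factorial_succ]
      push_cast
      ring
    rw [key, hzq, hza, hg]
    push_cast
    ring

theorem stmt5 (n : ℕ) (P : Polynomial ℚ) (d : ℕ)
    (hP : evalPS n P) (hd : isDenom P d) (p : ℕ) (hp : p.Prime)
    (hpd : p ∣ d) : p ≤ n + 1 := by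
  -- P is integer valued on ℕ
  have hval : ∀ x : ℕ, ∃ z : ℤ, P.eval (x : ℚ) = z := by
    intro x
    refine ⟨(∑ k ∈ Finset.range (x + 1), (k : ℤ) ^ n), ?_⟩
    rw [hP x]
    push_cast
    rfl
  -- the finite difference of P is (X+1)^n
  have hdelta : Polynomial.taylor 1 P - P = (Polynomial.X + 1) ^ n := by
    apply Polynomial.eq_of_infinite_eval_eq
    apply Set.infinite_of_injective_forall_mem
      (f := fun x : ℕ => (x : ℚ)) Nat.cast_injective
    intro x
    simp only [Set.mem_setOf_eq]
    rw [Polynomial.eval_sub, Polynomial.taylor_apply, Polynomial.eval_comp]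
    simp only [Polynomial.eval_add, Polynomial.eval_X, Polynomial.eval_C, Polynomial.eval_pow,
      Polynomial.eval_one]
    have h1 := hP (x + 1)
    rw [Finset.sum_range_succ] at h1
    have h2 := hP x
    rw [show ((x : ℚ) + 1) = (((x + 1 : ℕ) : ℚ)) by push_cast; ring, h1, h2]
    push_cast
    ring
  -- degree bound
  have hdeg : P.natDegree ≤ n + 1 := by
    by_contra hcon
    push_neg at hcon
    set m : ℕ := P.natDegree - 1 with hm
    have hm1 : P.natDegree = m + 1 := by omega
    have htop := delta_coeff_top P m (le_of_eq hm1)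
    rw [hdelta] at htop
    have hdn : ((Polynomial.X + 1 : Polynomial ℚ) ^ n).natDegree = n := by
      have : (Polynomial.X + 1 : Polynomial ℚ) = Polynomial.X + Polynomial.C 1 := by
        simp
      rw [this, Polynomial.natDegree_pow, Polynomial.natDegree_X_add_C, mul_one]
    have hzero : ((Polynomial.X + 1 : Polynomial ℚ) ^ n).coeff m = 0 :=
      Polynomial.coeff_eq_zero_of_natDegree_lt (by omega)
    rw [hzero] at htop
    have hP0 : P ≠ 0 := by
      intro h
      rw [h] at hm1
      simp at hm1
    have hlc : P.coeff (m + 1) ≠ 0 := by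
      rw [← hm1]
      exact Polynomial.leadingCoeff_ne_zero.mpr hP0
    have : ((m : ℚ) + 1) ≠ 0 := by positivity
    exact hlc (by
      field_simp at htop
      exact (mul_eq_zero.mp htop.symm).resolve_left this)
  -- (n+1)! • P has integer coefficients
  have hInt : isIntPoly (((n + 1).factorial : ℚ) • P) := by
    intro i
    obtain ⟨z, hz⟩ := factorial_smul_int (n + 1) P hdeg hval i
    exact ⟨z, by rwa [Polynomial.coeff_smul, smul_eq_mul]⟩
  -- minimality gives d ∣ (n+1)!
  obtain ⟨hdpos, hdint, hdmin⟩ := hd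
  have hfacpos : 0 < (n + 1).factorial := Nat.factorial_pos _
  set g : ℕ := Nat.gcd d ((n + 1).factorial) with hg
  have hgpos : 0 < g := Nat.gcd_pos_of_pos_left _ hdpos
  have hgint : isIntPoly ((g : ℚ) • P) := by
    intro i
    obtain ⟨zd, hzd⟩ := hdint i
    obtain ⟨ze, hze⟩ := hInt i
    rw [Polynomial.coeff_smul, smul_eq_mul] at hzd hze ⊢
    refine ⟨Nat.gcdA d ((n + 1).factorial) * zd + Nat.gcdB d ((n + 1).factorial) * ze, ?_⟩
    have hbez := Nat.gcd_eq_gcd_ab d ((n + 1).factorial)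
    have : (g : ℚ) = (d : ℚ) * (Nat.gcdA d ((n + 1).factorial) : ℚ)
        + ((n + 1).factorial : ℚ) * (Nat.gcdB d ((n + 1).factorial) : ℚ) := by
      have := congrArg (fun z : ℤ => (z : ℚ)) hbez
      push_cast at this ⊢
      exact this
    rw [this]
    have h3 : ((d : ℚ) * (Nat.gcdA d ((n + 1).factorial) : ℚ)
        + ((n + 1).factorial : ℚ) * (Nat.gcdB d ((n + 1).factorial) : ℚ)) * P.coeff i
        = (Nat.gcdA d ((n + 1).factorial) : ℚ) * ((d : ℚ) * P.coeff i)
          + (Nat.gcdB d ((n + 1).factorial) : ℚ) * (((n + 1).factorial : ℚ) * P.coeff i) := by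
      ring
    rw [h3, hzd, hze]
    push_cast
    ring
  have hdg : d ≤ g := hdmin g hgpos hgint
  have hgd : g ∣ d := Nat.gcd_dvd_left _ _
  have hge : g = d := le_antisymm (Nat.le_of_dvd hdpos hgd) hdg
  have hdvd : d ∣ (n + 1).factorial := hge ▸ Nat.gcd_dvd_right d ((n + 1).factorial)
  exact (Nat.Prime.dvd_factorial hp).mp (hpd.trans hdvd)
end

section
/- Let m ≥ 3 be odd, let k be an even integer with 2 ≤ k ≤ m-1, and let p be a prime with (p-1) | k and p ∤ C(m,k). Then p ≤ min(k+1, (m+1)/2). -/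
open Polynomial Finset

theorem stmt11 (m k p : ℕ) (hm : 3 ≤ m) (hmo : Odd m)
    (hk2 : 2 ≤ k) (hkm : k ≤ m - 1) (hke : Even k) (hp : p.Prime)
    (hdvd : (p - 1) ∣ k) (hnd : ¬ p ∣ m.choose k) :
    p ≤ k + 1 ∧ 2 * p ≤ m + 1 := by
  have hp2 := hp.two_le
  have hple : p - 1 ≤ k := Nat.le_of_dvd (by omega) hdvd
  refine ⟨by omega, ?_⟩
  by_contra h
  push_neg at h
  have hp3 : 3 ≤ p := by omega
  obtain ⟨c, hc⟩ := hdvd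
  have hk : k = p - 1 := by
    match c, hc with
    | 0, hc => omega
    | 1, hc => omega
    | (c + 2), hc =>
      have h2 : (p - 1) * 2 ≤ (p - 1) * (c + 2) := Nat.mul_le_mul_left _ (by omega)
      omega
  exact hnd (hp.dvd_choose (by omega) (by omega) (by omega))
end

section
/- Let m ≥ 4 be even, let k be an even integer with 2 ≤ k ≤ m-2, and let p be a prime with (p-1) | k and p ∤ C(m,k). Then p ≤ min(k+1, (m+1)/3). -/
open Polynomial Finset

lemma aux_dvd_choose_of_mod_lt {p m k : ℕ} (hp : p.Prime) (h : m % p < k % p) :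
    p ∣ m.choose k := by
  haveI : Fact p.Prime := ⟨hp⟩
  have H := Choose.choose_modEq_choose_mod_mul_choose_div_nat (n := m) (k := k) (p := p)
  rw [Nat.choose_eq_zero_of_lt h, zero_mul] at H
  exact (Nat.modEq_zero_iff_dvd).mp H

theorem stmt12 (m k p : ℕ) (hm : 4 ≤ m) (hme : Even m)
    (hk2 : 2 ≤ k) (hkm : k ≤ m - 2) (hke : Even k) (hp : p.Prime)
    (hdvd : (p - 1) ∣ k) (hnd : ¬ p ∣ m.choose k) :
    p ≤ k + 1 ∧ 3 * p ≤ m + 1 := by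
  have hp2 : 2 ≤ p := hp.two_le
  have hp1k : p - 1 ≤ k := Nat.le_of_dvd (by omega) hdvd
  refine ⟨by omega, ?_⟩
  by_contra hc
  push_neg at hc
  obtain ⟨u, hu⟩ := hme
  obtain ⟨v, hv⟩ := hke
  rcases eq_or_lt_of_le hp2 with h2 | h3
  · -- p = 2
    have hm4 : m = 4 := by omega
    have hk2' : k = 2 := by omega
    rw [hm4, hk2'] at hnd
    exact hnd (by rw [← h2]; decide)
  · -- p odd
    obtain ⟨s, hs⟩ := hp.odd_of_ne_two (by omega)
    obtain ⟨t, ht⟩ := hdvd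
    have ht1 : 1 ≤ t := by
      rcases Nat.eq_zero_or_pos t with h | h
      · rw [h, mul_zero] at ht; omega
      · exact h
    have ht2 : t ≤ 2 := by
      by_contra h
      push_neg at h
      have : (p - 1) * 3 ≤ (p - 1) * t := Nat.mul_le_mul_left _ h
      rw [← ht] at this
      omega
    -- digits of m
    have hrlt : m % p < p := Nat.mod_lt _ (by omega)
    have hqr : p * (m / p) + m % p = m := Nat.div_add_mod m p
    set q := m / p with hq
    set r := m % p with hr
    interval_cases t
    · -- k = p - 1
      have hkk : k = p - 1 := by omega
      have hkp : k % p = p - 1 := by rw [hkk]; exact Nat.mod_eq_of_lt (by omega)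
      have hrne : r < p - 1 := by
        by_contra hcon
        push_neg at hcon
        have hrv : r = p - 1 := by omega
        -- m = p*q + p - 1, bound q
        have hq1 : 1 ≤ q := by
          rcases Nat.eq_zero_or_pos q with h | h
          · exfalso; rw [h, mul_zero] at hqr; omega
          · exact h
        have hq2 : q ≤ 2 := by
          by_contra h
          push_neg at h
          have : p * 3 ≤ p * q := Nat.mul_le_mul_left _ h
          omega
        interval_cases q <;> omega
      exact hnd (aux_dvd_choose_of_mod_lt hp (by omega))
    · -- k = 2*(p-1)
      have hkk : k = 2 * p - 2 := by omega
      have hkp : k % p = p - 2 := by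
        rw [Nat.mod_eq_sub_mod (by omega)]
        have : k - p = p - 2 := by omega
        rw [this]
        exact Nat.mod_eq_of_lt (by omega)
      have hrne : r < p - 2 := by
        by_contra hcon
        push_neg at hcon
        have hq2' : q ≤ 2 := by
          by_contra h
          push_neg at h
          have : p * 3 ≤ p * q := Nat.mul_le_mul_left _ h
          omega
        have hq1' : 2 ≤ q := by
          by_contra h
          push_neg at h
          have : p * q ≤ p * 1 := Nat.mul_le_mul_left _ (by omega)
          omega
        interval_cases q
        omega
      exact hnd (aux_dvd_choose_of_mod_lt hp (by omega))
end

section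
/- Let m ≥ 4 be even. The binomial coefficients C(m,2), C(m,4), ..., C(m,m-2) are all even if and only if m is a power of 2. -/
open Polynomial Finset

lemma odd_choose_pow_val : ∀ a n : ℕ, n ≠ 0 → 2 ^ a ∣ n → ¬ 2 ^ (a + 1) ∣ n →
    Odd (n.choose (2 ^ a)) := by
  intro a
  induction a with
  | zero =>
    intro n hn _ h2
    have h2' : ¬ 2 ∣ n := by simpa using h2
    simpa [Nat.odd_iff, Nat.two_dvd_ne_zero] using h2'
  | succ a ih =>
    intro n hn h1 h2
    have hne : 2 ∣ n := dvd_trans (dvd_pow_self 2 (Nat.succ_ne_zero a)) h1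
    have key : n.choose (2 ^ (a + 1)) ≡ (n % 2).choose (2 ^ (a + 1) % 2) *
        (n / 2).choose (2 ^ (a + 1) / 2) [MOD 2] :=
      @Choose.choose_modEq_choose_mod_mul_choose_div_nat n (2 ^ (a+1)) 2 ⟨Nat.prime_two⟩
    have hmod : n % 2 = 0 := Nat.mod_eq_zero_of_dvd hne
    have hpow : 2 ^ (a + 1) % 2 = 0 := by simp [pow_succ, Nat.mul_mod_left]
    have hpd : 2 ^ (a + 1) / 2 = 2 ^ a := by
      rw [pow_succ]; exact Nat.mul_div_cancel _ (by norm_num)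
    rw [hmod, hpow, hpd, Nat.choose_zero_right, one_mul] at key
    have hodd : Odd ((n / 2).choose (2 ^ a)) := by
      apply ih (n / 2)
      · omega
      · exact (Nat.dvd_div_iff_mul_dvd hne).mpr (by rw [← pow_succ']; exact h1)
      · intro hc
        exact h2 (by
          have := (Nat.dvd_div_iff_mul_dvd hne).mp hc
          rw [← pow_succ'] at this
          exact this)
    rw [Nat.odd_iff] at hodd ⊢
    rw [Nat.ModEq] at key
    omega

theorem stmt13 (m : ℕ) (hm : 4 ≤ m) (hme : Even m) :
    (∀ k, 2 ≤ k → k ≤ m - 2 → Even k → Even (m.choose k)) ↔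
      ∃ r : ℕ, m = 2 ^ r := by
  constructor
  · intro h
    by_contra hc
    push_neg at hc
    set a := m.factorization 2 with ha
    have hm0 : m ≠ 0 := by omega
    have h1 : 2 ^ a ∣ m := Nat.ordProj_dvd m 2
    have h2 : ¬ 2 ^ (a + 1) ∣ m := Nat.pow_succ_factorization_not_dvd hm0 Nat.prime_two
    have ha1 : 1 ≤ a := by
      rcases Nat.lt_or_ge a 1 with h' | h'
      · interval_cases a
        · exfalso; apply h2
          simpa using hme.two_dvd
      · exact h'
    have hk2 : 2 ≤ 2 ^ a := by
      calc 2 = 2 ^ 1 := rfl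
      _ ≤ 2 ^ a := Nat.pow_le_pow_right (by norm_num) ha1
    have hkne : 2 ^ a ≠ m := fun he => hc a he.symm
    have hklt : 2 ^ a < m := lt_of_le_of_ne (Nat.le_of_dvd (by omega) h1) hkne
    have hkeven : Even (2 ^ a) := by
      obtain ⟨b, hb⟩ := Nat.exists_eq_add_of_le ha1
      exact ⟨2 ^ b, by rw [hb]; ring⟩
    have hkle : 2 ^ a ≤ m - 2 := by
      rcases hme with ⟨c, hcc⟩
      rcases hkeven with ⟨d, hdd⟩
      omega
    have := h (2 ^ a) hk2 hkle hkeven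
    have hodd := odd_choose_pow_val a m hm0 h1 h2
    exact (Nat.not_even_iff_odd.mpr hodd) this
  · rintro ⟨r, rfl⟩ k hk1 hk2 _
    rw [Nat.even_iff, ← Nat.dvd_iff_mod_eq_zero]
    apply Nat.Prime.dvd_choose_pow Nat.prime_two (by omega)
    intro hke
    omega
end

section
/- For every prime p and every integer m ≥ 1, the sum ∑_{1 ≤ j ≤ (m-1)/(p-1)} C(m, j(p-1)) is congruent to 0 modulo p. -/
open Polynomial Finset

theorem stmt15 (p m : ℕ) (hp : p.Prime) (hm : 1 ≤ m) :
    p ∣ ∑ j ∈ Finset.Icc 1 ((m - 1) / (p - 1)), m.choose (j * (p - 1)) := by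
  classical
  haveI := Fact.mk hp
  have hp1 : 0 < p - 1 := Nat.sub_pos_of_lt hp.one_lt
  have hcard : Fintype.card (ZMod p) = p := ZMod.card p
  have hS : ∀ i : ℕ, (∑ x : (ZMod p)ˣ, ((x : ZMod p)) ^ i)
      = if (p - 1) ∣ i then (-1 : ZMod p) else 0 := by
    intro i
    have := FiniteField.sum_pow_units (ZMod p) i
    rwa [hcard] at this
  have hmap : (univ : Finset (ZMod p)ˣ).map ⟨Units.val, fun _ _ h => Units.ext h⟩ = univ \ {0} := by
    ext x
    simp only [mem_map, mem_univ, Function.Embedding.coeFn_mk, true_and, mem_sdiff,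
      mem_singleton]
    exact ⟨fun ⟨u, hu⟩ => hu ▸ u.ne_zero, fun hx => ⟨Units.mk0 x hx, rfl⟩⟩
  have hL : (∑ x : (ZMod p)ˣ, ((x : ZMod p) + 1) ^ m)
      = (if (p - 1) ∣ m then (-1 : ZMod p) else 0) - 1 := by
    have h1 : (∑ x : (ZMod p)ˣ, ((x : ZMod p) + 1) ^ m)
        = ∑ b ∈ (univ : Finset (ZMod p)) \ {0}, (b + 1) ^ m := by
      rw [← hmap, Finset.sum_map]; rfl
    have h2 : (∑ b ∈ (univ : Finset (ZMod p)) \ {0}, (b + 1) ^ m)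
        = (∑ b : ZMod p, (b + 1) ^ m) - 1 := by
      rw [Finset.sum_sdiff_eq_sub (Finset.subset_univ _), Finset.sum_singleton]
      norm_num
    have h3 : (∑ b : ZMod p, (b + 1) ^ m) = ∑ c : ZMod p, c ^ m :=
      Fintype.sum_equiv (Equiv.addRight (1 : ZMod p)) _ _ (fun b => rfl)
    have h4 : (∑ c : ZMod p, c ^ m) = ∑ x : (ZMod p)ˣ, ((x : ZMod p)) ^ m := by
      have h5 : (∑ x : (ZMod p)ˣ, ((x : ZMod p)) ^ m)
          = ∑ b ∈ (univ : Finset (ZMod p)) \ {0}, b ^ m := by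
        rw [← hmap, Finset.sum_map]; rfl
      rw [h5, Finset.sum_sdiff_eq_sub (Finset.subset_univ _), Finset.sum_singleton,
        zero_pow (by omega), sub_zero]
    rw [h1, h2, h3, h4, hS]
  have hR : (∑ x : (ZMod p)ˣ, ((x : ZMod p) + 1) ^ m)
      = -∑ k ∈ (range (m + 1)).filter (fun k => (p - 1) ∣ k), (m.choose k : ZMod p) := by
    have key : ∀ x : (ZMod p)ˣ, ((x : ZMod p) + 1) ^ m
        = ∑ k ∈ range (m + 1), (x : ZMod p) ^ k * (m.choose k : ZMod p) := by
      intro x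
      rw [add_pow]
      simp
    rw [Finset.sum_congr rfl (fun x _ => key x), Finset.sum_comm]
    rw [Finset.sum_filter, ← Finset.sum_neg_distrib]
    refine Finset.sum_congr rfl fun k _ => ?_
    rw [← Finset.sum_mul, hS k]
    split_ifs <;> ring
  have hfil : (range (m + 1)).filter (fun k => (p - 1) ∣ k)
      = (range (m / (p - 1) + 1)).image (fun j => j * (p - 1)) := by
    ext k
    simp only [mem_filter, mem_range, mem_image, Nat.lt_succ_iff]
    constructor
    · rintro ⟨hk, j, rfl⟩
      exact ⟨j, (Nat.le_div_iff_mul_le hp1).mpr (by rw [Nat.mul_comm]; omega),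
        Nat.mul_comm _ _⟩
    · rintro ⟨j, hj, rfl⟩
      have := (Nat.le_div_iff_mul_le hp1).mp hj
      exact ⟨by omega, Dvd.intro_left j rfl⟩
  have hinj : Set.InjOn (fun j => j * (p - 1)) ↑(range (m / (p - 1) + 1)) :=
    fun a _ b _ h => Nat.eq_of_mul_eq_mul_right hp1 h
  have hR2 : (∑ k ∈ (range (m + 1)).filter (fun k => (p - 1) ∣ k), (m.choose k : ZMod p))
      = ∑ j ∈ range (m / (p - 1) + 1), (m.choose (j * (p - 1)) : ZMod p) := by
    rw [hfil, Finset.sum_image hinj]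
  have hsplit : (∑ j ∈ range (m / (p - 1) + 1), (m.choose (j * (p - 1)) : ZMod p))
      = 1 + ∑ j ∈ Icc 1 (m / (p - 1)), (m.choose (j * (p - 1)) : ZMod p) := by
    rw [Finset.range_eq_Ico, Finset.sum_eq_sum_Ico_succ_bot (Nat.succ_pos _)]
    rw [Nat.succ_eq_add_one, Finset.Ico_add_one_right_eq_Icc]
    simp
  -- value of sum over Icc 1 (m/(p-1))
  have hval : (∑ j ∈ Icc 1 (m / (p - 1)), (m.choose (j * (p - 1)) : ZMod p))
      = if (p - 1) ∣ m then 1 else 0 := by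
    have := hL.symm.trans hR
    rw [hR2, hsplit] at this
    split_ifs at this ⊢ <;> linear_combination this
  have hsd : m / (p - 1) = (m - 1) / (p - 1) + if (p - 1) ∣ m then 1 else 0 := by
    obtain ⟨n, rfl⟩ : ∃ n, m = n + 1 := ⟨m - 1, by omega⟩
    simp [Nat.succ_div]
  have hfin : (∑ j ∈ Icc 1 ((m - 1) / (p - 1)), (m.choose (j * (p - 1)) : ZMod p)) = 0 := by
    by_cases hd : (p - 1) ∣ m
    · rw [if_pos hd] at hsd hval
      have hm' : ((m - 1) / (p - 1) + 1) * (p - 1) = m := by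
        rw [← hsd]; exact Nat.div_mul_cancel hd
      rw [hsd, Finset.sum_Icc_succ_top (Nat.le_add_left 1 _), hm', Nat.choose_self] at hval
      push_cast at hval
      linear_combination hval
    · rw [if_neg hd, add_zero] at hsd
      rw [← hsd, hval, if_neg hd]
  exact (ZMod.natCast_eq_zero_iff _ p).mp (by rw [Nat.cast_sum]; exact hfin)
end

section
/- Let p be a prime and m ≥ 1. Then p divides C(m, p-1) if and only if p does not divide m+1. -/
open Polynomial Finset

theorem stmt16 (p m : ℕ) (hp : p.Prime) (hm : 1 ≤ m) :
    p ∣ m.choose (p - 1) ↔ ¬ p ∣ (m + 1) := by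
  haveI : Fact p.Prime := ⟨hp⟩
  have hp1 : p - 1 < p := Nat.sub_lt hp.pos one_pos
  have hl : m.choose (p - 1) ≡ (m % p).choose (p - 1) [MOD p] := by
    have := Choose.choose_modEq_choose_mod_mul_choose_div_nat (n := m) (k := p - 1) (p := p)
    simpa [Nat.mod_eq_of_lt hp1, Nat.div_eq_of_lt hp1] using this
  have hdvd : p ∣ m.choose (p - 1) ↔ p ∣ (m % p).choose (p - 1) := by
    constructor <;> intro h
    · exact (Nat.modEq_zero_iff_dvd).mp (((Nat.modEq_zero_iff_dvd).mpr h).symm.trans hl).symm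
    · exact (Nat.modEq_zero_iff_dvd).mp (hl.trans ((Nat.modEq_zero_iff_dvd).mpr h))
  have hmod : p ∣ m + 1 ↔ m % p = p - 1 := by
    have h2 : m % p < p := Nat.mod_lt m hp.pos
    have he : (m + 1) % p = (m % p + 1) % p := by
      conv_lhs => rw [Nat.add_mod, Nat.mod_eq_of_lt hp.one_lt]
    rw [Nat.dvd_iff_mod_eq_zero, he, ← Nat.dvd_iff_mod_eq_zero]
    constructor
    · intro h
      have := Nat.le_of_dvd (by omega) h
      omega
    · intro h
      exact ⟨1, by omega⟩
  rw [hdvd, hmod]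
  by_cases h : m % p = p - 1
  · simp [h, Nat.dvd_one, hp.ne_one]
  · have hlt : m % p < p - 1 := by have := Nat.mod_lt m hp.pos; omega
    simp [Nat.choose_eq_zero_of_lt hlt, h]
end

section
/- Let p be a prime and m > p with p ≤ (m+1)/2. If the sum of the base-p digits of m is at least p, then there exists j with 1 ≤ j ≤ ⌊(m-1)/(p-1)⌋ such that p does not divide C(m, j(p-1)). -/
open Polynomial Finset

lemma sumdig_rec (p m : ℕ) (hp : 2 ≤ p) (hm : m ≠ 0) :
    (Nat.digits p m).sum = m % p + (Nat.digits p (m / p)).sum := by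
  rw [Nat.digits_def' (by omega : 1 < p) (Nat.pos_of_ne_zero hm)]; simp

lemma sumdig_mul (p a : ℕ) (hp : 2 ≤ p) :
    (Nat.digits p (p * a)).sum = (Nat.digits p a).sum := by
  rcases eq_or_ne a 0 with rfl | ha
  · simp
  · rw [sumdig_rec p _ hp (by positivity), Nat.mul_mod_right,
      Nat.mul_div_cancel_left _ (by omega)]
    simp

lemma key (p : ℕ) (hp : 2 ≤ p) : ∀ m s : ℕ, s ≤ (Nat.digits p m).sum →
    ∃ k, k ≤ m ∧ (Nat.digits p k).sum = s ∧
      (Nat.digits p (m - k)).sum = (Nat.digits p m).sum - s := by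
  intro m
  induction m using Nat.strong_induction_on with
  | _ m ih =>
    intro s hs
    rcases eq_or_ne m 0 with rfl | hm
    · exact ⟨0, by simpa using hs, by simp [Nat.le_zero.mp (by simpa using hs)], by simp⟩
    have hrec := sumdig_rec p m hp hm
    rcases le_or_gt s (m % p) with hsr | hsr
    · -- take k = s
      refine ⟨s, le_trans hsr (Nat.mod_le m p), ?_, ?_⟩
      · rcases eq_or_ne s 0 with rfl | hs0
        · simp
        · rw [sumdig_rec p s hp hs0, Nat.mod_eq_of_lt (lt_of_le_of_lt hsr (Nat.mod_lt m (by omega))),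
            Nat.div_eq_of_lt (lt_of_le_of_lt hsr (Nat.mod_lt m (by omega)))]
          simp
      · have hmp : m % p < p := Nat.mod_lt m (by omega)
        have hmple : m % p ≤ m := Nat.mod_le m p
        rcases eq_or_ne (m - s) 0 with h0 | h0
        · have hdiv : m / p = 0 := Nat.div_eq_of_lt (by omega)
          rw [hdiv] at hrec
          rw [h0]
          simp at hrec ⊢
          omega
        · rw [sumdig_rec p (m - s) hp h0]
          have hm' : m = p * (m / p) + m % p := (Nat.div_add_mod m p).symm ▸ by omega
          have h1 : (m - s) % p = m % p - s := by
            have : m - s = p * (m / p) + (m % p - s) := by omega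
            rw [this, Nat.mul_add_mod]
            exact Nat.mod_eq_of_lt (by have := Nat.mod_lt m (show 0 < p by omega); omega)
          have h2 : (m - s) / p = m / p := by
            have : m - s = p * (m / p) + (m % p - s) := by omega
            have h3 : (m % p - s) / p = 0 := Nat.div_eq_of_lt (by omega)
            rw [this, Nat.mul_add_div (by omega : 0 < p), h3, Nat.add_zero]
          rw [h1, h2, hrec]
          omega
    · -- s > m % p; recurse on q = m / p
      have hq : m / p < m := Nat.div_lt_self (by omega) (by omega)
      obtain ⟨k', hk'le, hk's, hk'rest⟩ := ih (m / p) hq (s - m % p) (by omega)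
      refine ⟨m % p + p * k', ?_, ?_, ?_⟩
      · have := Nat.div_add_mod m p
        have := Nat.mul_le_mul_left p hk'le
        omega
      · have hk0 : m % p + p * k' ≠ 0 := by
          rcases eq_or_ne k' 0 with rfl | h
          · simp at hk's; omega
          · positivity
        rw [sumdig_rec p _ hp hk0, Nat.add_mul_mod_self_left,
          Nat.mod_eq_of_lt (Nat.mod_lt m (by omega)),
          Nat.add_mul_div_left _ _ (by omega : 0 < p),
          Nat.div_eq_of_lt (Nat.mod_lt m (by omega)), zero_add, hk's]
        omega
      · have hmeq : m - (m % p + p * k') = p * (m / p - k') := by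
          have := Nat.div_add_mod m p
          have := Nat.mul_le_mul_left p hk'le
          have h1 := Nat.div_add_mod m p
          have h2 := Nat.mul_le_mul_left p hk'le
          rw [Nat.mul_sub]
          omega
        rw [hmeq, sumdig_mul p _ hp, hk'rest, hrec]
        omega

theorem stmt17 (p m : ℕ) (hp : p.Prime) (hpm : p < m)
    (hbound : 2 * p ≤ m + 1) (hs : p ≤ (Nat.digits p m).sum) :
    ∃ j : ℕ, 1 ≤ j ∧ j ≤ (m - 1) / (p - 1) ∧ ¬ p ∣ m.choose (j * (p - 1)) := by
  have hp2 := hp.two_le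
  obtain ⟨k, hkm, hks, hkrest⟩ := key p hp2 m (p - 1) (by omega)
  have hk0 : k ≠ 0 := by
    rintro rfl
    simp at hks
    omega
  have hkm1 : k ≤ m - 1 := by
    rcases eq_or_ne k m with rfl | h
    · omega
    · omega
  have hdvd : (p - 1) ∣ k := by
    rcases eq_or_ne p 2 with rfl | hne
    · simp
    · have hmod : p % (p - 1) = 1 := by
        have : p = (p - 1) + 1 := by omega
        nth_rewrite 1 [this]
        rw [Nat.add_mod_left, Nat.mod_eq_of_lt (by omega)]
      have h1 : k ≡ (Nat.digits p k).sum [MOD p - 1] := Nat.modEq_digits_sum (p - 1) p hmod k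
      rw [hks] at h1
      have h2 : k ≡ 0 [MOD p - 1] := h1.trans (Nat.modEq_zero_iff_dvd.mpr dvd_rfl)
      exact (Nat.modEq_zero_iff_dvd).mp h2
  refine ⟨k / (p - 1), ?_, Nat.div_le_div_right hkm1, ?_⟩
  · have : p - 1 ≤ k := Nat.le_of_dvd (Nat.pos_of_ne_zero hk0) hdvd
    exact Nat.one_le_div_iff (by omega) |>.mpr this
  · rw [Nat.div_mul_cancel hdvd]
    have : Fact p.Prime := ⟨hp⟩
    have hv := sub_one_mul_padicValNat_choose_eq_sub_sum_digits (p := p) hkm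
    rw [hks, hkrest] at hv
    have hv0 : padicValNat p (m.choose k) = 0 := by
      have : (p - 1) * padicValNat p (m.choose k) = 0 := by omega
      exact Nat.mul_eq_zero.mp (by rwa [Nat.mul_comm] at this) |>.elim
        (fun h => h) (fun h => absurd h (by omega))
    intro hd
    have hne : m.choose k ≠ 0 := Nat.choose_pos hkm |>.ne'
    rcases (padicValNat.eq_zero_iff).mp hv0 with h | h | h
    · omega
    · exact hne h
    · exact h hd
end

section
/- For every odd prime p, setting n = 2p-2, the prime p divides q_n and p = M_n, where M_n = (n+2)/2; hence the bound M_n on prime factors of q_n is attained for infinitely many even n, and in particular the sequence (q_n) is unbounded. -/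
open Polynomial Finset

/-- The explicit Faulhaber polynomial with value `∑_{k ≤ x} k^n` at `x`. -/
noncomputable def faul (n : ℕ) : Polynomial ℚ :=
  X ^ n + ∑ i ∈ Finset.range (n + 1),
    C (_root_.bernoulli i * ((n + 1).choose i) / (n + 1)) * X ^ (n + 1 - i)

lemma faul_eval (n : ℕ) (x : ℕ) :
    (faul n).eval (x : ℚ) = ∑ k ∈ Finset.range (x + 1), (k : ℚ) ^ n := by
  rw [Finset.sum_range_succ, _root_.sum_range_pow]
  simp only [faul, eval_add, eval_pow, eval_X, eval_finset_sum, eval_mul, eval_C]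
  rw [add_comm]
  congr 1
  exact Finset.sum_congr rfl fun i _ => by ring

lemma faul_coeff_top (n : ℕ) :
    (faul n).coeff (n + 1) = 1 / (n + 1) := by
  rw [faul, Polynomial.coeff_add, Polynomial.coeff_X_pow, Polynomial.finset_sum_coeff]
  simp only [Polynomial.coeff_C_mul, Polynomial.coeff_X_pow]
  rw [Finset.sum_eq_single 0]
  · simp [if_neg (by omega : ¬ n + 1 = n)]
  · intro i hi hi0
    rw [Finset.mem_range] at hi
    rw [if_neg (by omega), mul_zero]
  · simp

lemma evalPS_eq_faul (n : ℕ) (P : Polynomial ℚ) (hP : evalPS n P) : P = faul n := by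
  apply Polynomial.eq_of_infinite_eval_eq
  apply Set.Infinite.mono (s := Set.range ((↑) : ℕ → ℚ))
  · rintro _ ⟨x, rfl⟩
    exact (hP x).trans (faul_eval n x).symm
  · exact Set.infinite_range_of_injective Nat.cast_injective

/-- The key divisibility: if `e • P` is integral, where `P` is the power-sum
polynomial for `n = 2p-2`, then `p * (2p-1) ∣ e`. -/
lemma main_dvd (p : ℕ) (hp : p.Prime) (hodd : Odd p) (P : Polynomial ℚ) (e : ℕ)
    (he : 0 < e) (hP : evalPS (2 * p - 2) P) (hint : isIntPoly ((e : ℚ) • P)) :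
    p * (2 * p - 1) ∣ e := by
  have hp3 : 3 ≤ p := by
    have := hp.two_le; rcases hodd with ⟨k, hk⟩; omega
  set n := 2 * p - 2 with hn
  have hn4 : 4 ≤ n := by omega
  have hPF := evalPS_eq_faul n P hP
  -- (n+1) ∣ e  from the leading coefficient
  have hlead : P.coeff (n + 1) = 1 / (n + 1) := by
    rw [hPF]; exact faul_coeff_top n
  obtain ⟨z, hz⟩ := hint (n + 1)
  rw [Polynomial.coeff_smul, hlead, smul_eq_mul] at hz
  have hne : ((n : ℚ) + 1) ≠ 0 := by positivity
  have hdvd1 : (n + 1) ∣ e := by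
    have h1 : (e : ℤ) = z * (n + 1) := by
      have : ((e : ℤ) : ℚ) = ((z * (n + 1) : ℤ) : ℚ) := by
        push_cast
        field_simp at hz
        linarith [hz]
      exact_mod_cast this
    exact Int.ofNat_dvd.mp ⟨z, by push_cast [h1]; ring⟩
  -- p ∣ e  via values mod p
  haveI : Fact p.Prime := ⟨hp⟩
  obtain ⟨Q, hQ⟩ : ∃ q : Polynomial ℤ, q.map (Int.castRingHom ℚ) = (e : ℚ) • P := by
    rw [← Polynomial.mem_lifts, Polynomial.lifts_iff_coeff_lifts]
    intro i
    obtain ⟨z, hz⟩ := hint i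
    exact ⟨z, hz.symm⟩
  have hval : ∀ x : ℕ, ((Q.eval (x : ℤ) : ℤ) : ℚ) = (e : ℚ) * P.eval (x : ℚ) := by
    intro x
    have : ((e : ℚ) • P).eval (x : ℚ) = (e : ℚ) * P.eval (x : ℚ) := by
      simp
    rw [← this, ← hQ]
    rw [Polynomial.eval_map]
    rw [show ((x : ℚ)) = (Int.castRingHom ℚ) (x : ℤ) by simp]
    rw [Polynomial.eval₂_at_apply]
    simp
  -- value at 0 is 0
  have hQ0 : Q.eval 0 = 0 := by
    have h0 := hval 0
    rw [hP 0] at h0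
    simp [zero_pow (show n ≠ 0 by omega)] at h0
    exact_mod_cast h0
  -- value at p
  set S : ℕ := ∑ k ∈ Finset.range (p + 1), k ^ n with hS
  have hQp : Q.eval (p : ℤ) = (e : ℤ) * S := by
    have h1 := hval p
    rw [hP p] at h1
    have : ((S : ℤ) : ℚ) = ∑ k ∈ Finset.range (p + 1), (k : ℚ) ^ n := by push_cast [hS]; ring_nf
    have h2 : ((Q.eval (p : ℤ) : ℤ) : ℚ) = (((e : ℤ) * S : ℤ) : ℚ) := by
      rw [h1]; push_cast; rw [← this]; push_cast; ring
    exact_mod_cast h2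
  -- mod p : eval at p ≡ eval at 0
  have hm : ((Q.eval (p : ℤ) : ℤ) : ZMod p) = ((Q.eval (0 : ℤ) : ℤ) : ZMod p) := by
    have h1 : ∀ a : ℤ, ((Q.eval a : ℤ) : ZMod p)
        = (Q.map (Int.castRingHom (ZMod p))).eval ((a : ℤ) : ZMod p) := by
      intro a
      rw [Polynomial.eval_map, show ((a : ℤ) : ZMod p) = (Int.castRingHom (ZMod p)) a from rfl,
        Polynomial.eval₂_at_apply]
      rfl
    rw [h1, h1]
    norm_num
  rw [hQp, hQ0] at hm
  -- sum of n-th powers mod p is -1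
  have hSmod : ((S : ℕ) : ZMod p) = -1 := by
    have hcast : ((S : ℕ) : ZMod p) = ∑ k ∈ Finset.range (p + 1), ((k : ZMod p)) ^ n := by
      push_cast [hS]; rfl
    rw [hcast, Finset.sum_range_succ]
    have hpz : ((p : ZMod p)) = 0 := ZMod.natCast_self p
    rw [hpz, zero_pow (by omega), add_zero]
    have hbij : ∑ k ∈ Finset.range p, ((k : ZMod p)) ^ n = ∑ x : ZMod p, x ^ n := by
      refine Finset.sum_nbij' (fun k => ((k : ZMod p))) (fun x => x.val) ?_ ?_ ?_ ?_ ?_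
      · intro a ha; exact Finset.mem_univ _
      · intro a ha; exact Finset.mem_range.mpr (ZMod.val_lt a)
      · intro a ha; exact ZMod.val_natCast_of_lt (Finset.mem_range.mp ha)
      · intro a ha; exact ZMod.natCast_zmod_val a
      · intro a ha; rfl
    rw [hbij]
    have hterm : ∀ x : ZMod p, x ^ n = if x = 0 then 0 else 1 := by
      intro x
      by_cases hx : x = 0
      · simp [hx, zero_pow (by omega : n ≠ 0)]
      · rw [if_neg hx]
        have hfermat : x ^ (p - 1) = 1 := ZMod.pow_card_sub_one_eq_one hx
        have : n = (p - 1) * 2 := by omega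
        rw [this, pow_mul, hfermat, one_pow]
    rw [Finset.sum_congr rfl fun x _ => hterm x]
    have hsplit : (∑ x : ZMod p, if x = 0 then (0 : ZMod p) else 1)
        = (∑ _x : ZMod p, (1 : ZMod p)) - ∑ x : ZMod p, (if x = 0 then (1 : ZMod p) else 0) := by
      rw [← Finset.sum_sub_distrib]
      exact Finset.sum_congr rfl fun x _ => by split <;> simp
    rw [hsplit, Finset.sum_const, Finset.sum_ite_eq' Finset.univ (0 : ZMod p) (fun _ => (1 : ZMod p))]
    simp [ZMod.card p, ZMod.natCast_self]
  have hdvd2 : p ∣ e := by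
    have hz : ((e : ZMod p)) * ((S : ZMod p)) = 0 := by
      have h := hm
      push_cast at h
      exact_mod_cast h
    rw [hSmod] at hz
    have : ((e : ZMod p)) = 0 := by
      have hne1 : (-1 : ZMod p) ≠ 0 := neg_ne_zero.mpr one_ne_zero
      rcases mul_eq_zero.mp hz with h | h
      · exact h
      · exact absurd h hne1
    exact (ZMod.natCast_eq_zero_iff e p).mp this
  -- combine
  have hcop : Nat.Coprime p (2 * p - 1) := by
    rw [hp.coprime_iff_not_dvd]
    intro hdl
    have : p ∣ 1 := by
      have h2p : p ∣ 2 * p := ⟨2, by ring⟩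
      have := Nat.dvd_sub h2p hdl
      simpa [show 2 * p - (2 * p - 1) = 1 by omega] using this
    have := Nat.le_of_dvd one_pos this
    omega
  have : n + 1 = 2 * p - 1 := by omega
  rw [this] at hdvd1
  exact Nat.Coprime.mul_dvd_of_dvd_of_dvd hcop hdvd2 hdvd1

theorem stmt18 (p : ℕ) (hp : p.Prime) (hodd : Odd p) :
    (∀ (P : Polynomial ℚ) (d : ℕ), evalPS (2 * p - 2) P → isDenom P d →
      p ∣ d / (2 * p - 1) ∧ (2 * p - 2) + 2 = 2 * p) ∧
    ∀ N : ℕ, ∃ m : ℕ, Even m ∧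
      ∀ (Q : Polynomial ℚ) (e : ℕ), evalPS m Q → isDenom Q e → N < e / (m + 1) := by
  have hp3 : 3 ≤ p := by have := hp.two_le; rcases hodd with ⟨k, hk⟩; omega
  constructor
  · intro P d hP hd
    obtain ⟨hdpos, hdint, -⟩ := hd
    obtain ⟨k, hk⟩ := main_dvd p hp hodd P d hdpos hP hdint
    refine ⟨?_, by omega⟩
    have hdk : d / (2 * p - 1) = p * k := by
      rw [hk, show p * (2 * p - 1) * k = (2 * p - 1) * (p * k) by ring]
      exact Nat.mul_div_cancel_left _ (by omega)
    rw [hdk]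
    exact Dvd.intro k rfl
  · intro N
    obtain ⟨q, hqN, hq⟩ := Nat.exists_infinite_primes (max (N + 1) 3)
    have hq3 : 3 ≤ q := le_trans (le_max_right _ _) hqN
    have hqN' : N < q := lt_of_lt_of_le (lt_of_lt_of_le (Nat.lt_succ_self N) (le_max_left _ _)) hqN
    have hqodd : Odd q := hq.odd_of_ne_two (by omega)
    refine ⟨2 * q - 2, ⟨q - 1, by omega⟩, ?_⟩
    intro Q e hQ he
    obtain ⟨hepos, heint, -⟩ := he
    obtain ⟨k, hk⟩ := main_dvd q hq hqodd Q e hepos hQ heint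
    have hm1 : 2 * q - 2 + 1 = 2 * q - 1 := by omega
    have hk1 : 1 ≤ k := by
      rcases Nat.eq_zero_or_pos k with h | h
      · subst h; omega
      · exact h
    rw [hm1, hk, show q * (2 * q - 1) * k = (2 * q - 1) * (q * k) by ring,
      Nat.mul_div_cancel_left _ (by omega : 0 < 2 * q - 1)]
    calc N < q := hqN'
    _ ≤ q * k := Nat.le_mul_of_pos_right q hk1
end

section
/- For every n ≥ 1, the denominator of the Bernoulli polynomial B_n(x) (the least positive integer D with D·B_n(x) ∈ ℤ[x]) is even and squarefree, and is divisible by the denominator of the Bernoulli number B_n. -/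
open Polynomial Finset

lemma exists_int_of_den_dvd {q : ℚ} {e : ℕ} (h : q.den ∣ e) : ∃ z : ℤ, (e : ℚ) * q = z := by
  obtain ⟨c, rfl⟩ := h
  refine ⟨q.num * c, ?_⟩
  push_cast
  rw [mul_comm (q.den : ℚ) (c : ℚ), mul_assoc, Rat.den_mul_eq_num, mul_comm]

lemma den_dvd_of_int_mul {q : ℚ} {e : ℕ} (he : 0 < e) {z : ℤ} (h : (e : ℚ) * q = z) :
    q.den ∣ e := by
  have he' : (e : ℚ) ≠ 0 := by exact_mod_cast he.ne'
  have hq : q = Rat.divInt z e := by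
    rw [Rat.divInt_eq_div]
    field_simp at h ⊢
    push_cast at h ⊢
    linarith [h]
  have := Rat.den_dvd z (e : ℤ)
  rw [← hq] at this
  exact_mod_cast this

lemma norm_le_pow_iff_den {p : ℕ} [hp : Fact p.Prime] (n : ℕ) (q : ℚ) :
    padicNorm p q ≤ (p : ℚ) ^ n ↔ ¬ (p ^ (n + 1) ∣ q.den) := by
  by_cases hq : q = 0
  · subst hq
    simp only [padicNorm.zero, Rat.den_zero, Nat.dvd_one]
    constructor
    · intro _ h
      have h2 : 2 ≤ p := hp.out.two_le
      have : p ≤ p ^ (n+1) := Nat.le_self_pow (by omega) p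
      omega
    · intro _
      positivity
  · have hp1 : 1 < (p : ℚ) := by exact_mod_cast hp.out.one_lt
    rw [padicNorm.eq_zpow_of_nonzero hq]
    rw [show ((p:ℚ)^n) = (p:ℚ)^(n:ℤ) by norm_cast]
    rw [zpow_le_zpow_iff_right₀ hp1]
    rw [padicValRat]
    have hden : q.den ≠ 0 := q.den_pos.ne'
    rw [padicValNat_dvd_iff (n+1) q.den]
    by_cases hd : p ∣ q.den
    · have hnum : ¬ (p ∣ q.num.natAbs) := by
        intro hn
        have h1 : p ∣ Nat.gcd q.num.natAbs q.den := Nat.dvd_gcd hn hd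
        rw [q.reduced] at h1
        exact hp.out.one_lt.ne' (Nat.eq_one_of_dvd_one h1)
      have h0 : padicValInt p q.num = 0 := by
        unfold padicValInt
        exact padicValNat.eq_zero_of_not_dvd hnum
      rw [h0]
      constructor
      · intro h hc
        rcases hc with h1 | h2
        · exact hden h1
        · omega
      · intro h
        push_neg at h
        omega
    · have h0 : padicValNat p q.den = 0 := padicValNat.eq_zero_of_not_dvd hd
      rw [h0]
      constructor
      · intro _ hc
        rcases hc with h1 | h2
        · exact hden h1
        · omega
      · intro _
        omega


section
variable {p : ℕ} [hp : Fact p.Prime]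

lemma frac_norm (a m : ℕ) (hm : 0 < m) :
    padicNorm p ((p : ℚ) ^ a / (m : ℚ)) = (p : ℚ) ^ ((padicValNat p m : ℤ) - a) := by
  have hp0 : (0 : ℚ) < p := by exact_mod_cast hp.out.pos
  have hm0 : (m : ℚ) ≠ 0 := by exact_mod_cast hm.ne'
  rw [padicNorm.div]
  have h1 : padicNorm p ((p : ℚ) ^ a) = (p : ℚ) ^ (-(a : ℤ)) := by
    rw [show ((p:ℚ)^a) = (((p^a : ℕ) : ℚ)) by push_cast; ring]
    rw [padicNorm.eq_zpow_of_nonzero (by exact_mod_cast (pow_pos hp.out.pos a).ne'), padicValRat.of_nat,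
      padicValNat.prime_pow]
  have h2 : padicNorm p (m : ℚ) = (p : ℚ) ^ (-(padicValNat p m : ℤ)) := by
    rw [padicNorm.eq_zpow_of_nonzero hm0, padicValRat.of_nat]
  rw [h1, h2, ← zpow_sub₀ (ne_of_gt hp0)]
  ring_nf

lemma val_lt (m : ℕ) (hm : 0 < m) : padicValNat p m < m := by
  have h1 : p ^ padicValNat p m ∣ m := pow_padicValNat_dvd
  have h2 : p ^ padicValNat p m ≤ m := Nat.le_of_dvd hm h1
  have h3 : 2 ^ padicValNat p m ≤ p ^ padicValNat p m :=
    Nat.pow_le_pow_left hp.out.two_le _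
  have h4 : padicValNat p m < 2 ^ padicValNat p m := Nat.lt_two_pow_self
  omega

lemma term_eq (k i : ℕ) (hi : i < k) :
    _root_.bernoulli i * ((k + 1).choose i : ℚ) * (p : ℚ) ^ (k + 1 - i) / ((k : ℚ) + 1) =
      ((p : ℚ) * _root_.bernoulli i) * (k.choose i : ℚ) *
        ((p : ℚ) ^ (k - i) / ((k + 1 - i : ℕ) : ℚ)) := by
  have hk1 : ((k : ℚ) + 1) ≠ 0 := by positivity
  have hki : (0:ℚ) < ((k + 1 - i : ℕ) : ℚ) := by
    have : 0 < k + 1 - i := by omega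
    exact_mod_cast this
  have hc : ((k + 1).choose i : ℚ) * ((k + 1 - i : ℕ) : ℚ) = (k.choose i : ℚ) * ((k : ℚ) + 1) := by
    have h' : (k+1).choose i * (k + 1 - i) = k.choose i * (k+1) := (Nat.choose_mul_succ_eq k i).symm
    exact_mod_cast h'
  have hpow : (p : ℚ) ^ (k + 1 - i) = (p : ℚ) ^ (k - i) * p := by
    rw [show k + 1 - i = (k - i) + 1 by omega, pow_succ]
  rw [hpow, mul_div_assoc' ((p : ℚ) * _root_.bernoulli i * (k.choose i : ℚ)),
    div_eq_div_iff hk1 hki.ne']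
  linear_combination (_root_.bernoulli i * (p:ℚ)^(k-i) * (p:ℚ)) * hc

lemma bern_decomp (k : ℕ) :
    (p : ℚ) * _root_.bernoulli k =
      ((∑ j ∈ Finset.range p, j ^ k : ℕ) : ℚ) -
        ∑ i ∈ Finset.range k,
          _root_.bernoulli i * ((k + 1).choose i : ℚ) * (p : ℚ) ^ (k + 1 - i) / ((k : ℚ) + 1) := by
  have h := sum_range_pow p k
  rw [Finset.sum_range_succ] at h
  have hk1 : ((k : ℚ) + 1) ≠ 0 := by positivity
  have hlast : _root_.bernoulli k * ((k + 1).choose k : ℚ) * (p : ℚ) ^ (k + 1 - k) / ((k : ℚ) + 1)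
      = (p : ℚ) * _root_.bernoulli k := by
    rw [Nat.choose_succ_self_right, show k + 1 - k = 1 by omega, pow_one]
    push_cast
    field_simp
  rw [hlast] at h
  have hcast : ((∑ j ∈ Finset.range p, j ^ k : ℕ) : ℚ) = ∑ j ∈ Finset.range p, (j : ℚ) ^ k := by
    push_cast; rfl
  rw [hcast, h]
  ring

lemma bern_mul_norm_le : ∀ k : ℕ, padicNorm p ((p : ℚ) * _root_.bernoulli k) ≤ 1 := by
  intro k
  induction k using Nat.strong_induction_on with
  | _ k ih =>
    rw [bern_decomp k]
    refine le_trans padicNorm.sub (max_le (padicNorm.of_nat _) ?_)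
    refine padicNorm.sum_le' (fun i hi => ?_) zero_le_one
    rw [Finset.mem_range] at hi
    rw [term_eq k i hi, padicNorm.mul, padicNorm.mul]
    have hki : 0 < k + 1 - i := by omega
    have n1 : padicNorm p ((p : ℚ) * _root_.bernoulli i) ≤ 1 := ih i hi
    have n2 : padicNorm p ((k.choose i : ℚ)) ≤ 1 := padicNorm.of_nat _
    have n3 : padicNorm p ((p : ℚ) ^ (k - i) / ((k + 1 - i : ℕ) : ℚ)) ≤ 1 := by
      rw [frac_norm _ _ hki]
      refine zpow_le_one_of_nonpos₀ (by exact_mod_cast hp.out.one_le) ?_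
      have := val_lt (p := p) (k + 1 - i) hki
      omega
    have h1 := padicNorm.nonneg (p := p) ((p : ℚ) * _root_.bernoulli i)
    have h2 := padicNorm.nonneg (p := p) ((k.choose i : ℚ))
    have h3 := padicNorm.nonneg (p := p) ((p : ℚ) ^ (k - i) / ((k + 1 - i : ℕ) : ℚ))
    exact mul_le_one₀ (mul_le_one₀ n1 h2 n2) h3 n3

lemma bern_norm_le (k : ℕ) : padicNorm p (_root_.bernoulli k) ≤ (p : ℚ) ^ 1 := by
  have h := bern_mul_norm_le (p := p) k
  rw [padicNorm.mul, padicNorm.padicNorm_p_of_prime] at h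
  have hp0 : (0 : ℚ) < p := by exact_mod_cast hp.out.pos
  rw [pow_one]
  calc padicNorm p (_root_.bernoulli k)
      = (p : ℚ) * ((p:ℚ)⁻¹ * padicNorm p (_root_.bernoulli k)) := by field_simp
    _ ≤ (p : ℚ) * 1 := by
        refine mul_le_mul_of_nonneg_left h hp0.le
    _ = p := mul_one _

end

lemma bern_even_norm (k : ℕ) (hk : Even k) (h0 : k ≠ 0) :
    padicNorm 2 (((2 : ℕ) : ℚ) * _root_.bernoulli k) = 1 := by
  have hk2 : 2 ≤ k := by
    rcases hk with ⟨a, rfl⟩; omega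
  have hS : (∑ j ∈ Finset.range 2, j ^ k : ℕ) = 1 := by
    rw [Finset.sum_range_succ, Finset.sum_range_succ, Finset.sum_range_zero, Nat.zero_pow
      (by omega), Nat.one_pow]
  have hdec := bern_decomp (p := 2) k
  rw [hS] at hdec
  rw [hdec]
  have hT : padicNorm 2 (∑ i ∈ Finset.range k,
      _root_.bernoulli i * ((k + 1).choose i : ℚ) * ((2 : ℕ) : ℚ) ^ (k + 1 - i) / ((k : ℚ) + 1))
      ≤ (2 : ℚ)⁻¹ := by
    refine padicNorm.sum_le' (fun i hi => ?_) (by norm_num)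
    rw [Finset.mem_range] at hi
    rcases Nat.even_or_odd i with hie | hio
    · -- i even
      rw [term_eq k i hi, padicNorm.mul, padicNorm.mul]
      have hki : 0 < k + 1 - i := by omega
      have n1 := bern_mul_norm_le (p := 2) i
      have n2 : padicNorm 2 ((k.choose i : ℚ)) ≤ 1 := padicNorm.of_nat _
      have hodd : ¬ (2 ∣ (k + 1 - i)) := by
        rcases hk with ⟨a, rfl⟩; rcases hie with ⟨b, rfl⟩; omega
      have hki2 : 2 ≤ k - i := by
        rcases hk with ⟨a, rfl⟩; rcases hie with ⟨b, rfl⟩; omega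
      have n3 : padicNorm 2 (((2 : ℕ) : ℚ) ^ (k - i) / ((k + 1 - i : ℕ) : ℚ)) ≤ (2:ℚ)⁻¹ := by
        rw [frac_norm _ _ hki, padicValNat.eq_zero_of_not_dvd hodd,
          show ((2:ℚ))⁻¹ = ((2:ℕ):ℚ) ^ (-1 : ℤ) by norm_num]
        exact zpow_le_zpow_right₀ (by norm_num) (by omega)
      have h1 := padicNorm.nonneg (p := 2) ((2 : ℚ) * _root_.bernoulli i)
      have h2 := padicNorm.nonneg (p := 2) ((k.choose i : ℚ))
      calc padicNorm 2 (((2:ℕ):ℚ) * _root_.bernoulli i) * padicNorm 2 ((k.choose i : ℚ)) *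
            padicNorm 2 (((2 : ℕ) : ℚ) ^ (k - i) / ((k + 1 - i : ℕ) : ℚ))
          ≤ 1 * (2:ℚ)⁻¹ := by
            refine mul_le_mul (mul_le_one₀ n1 h2 n2) n3 (padicNorm.nonneg _) (by norm_num)
        _ = (2:ℚ)⁻¹ := by norm_num
    · rcases eq_or_ne i 1 with rfl | hne
      · -- i = 1
        have hterm : _root_.bernoulli 1 * ((k + 1).choose 1 : ℚ) * ((2 : ℕ) : ℚ) ^ (k + 1 - 1) / ((k : ℚ) + 1)
            = -(((2 : ℕ) : ℚ) ^ (k - 1)) := by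
          rw [_root_.bernoulli_one, Nat.choose_one_right, show k + 1 - 1 = (k - 1) + 1 by omega,
            pow_succ]
          have hk1 : ((k : ℚ) + 1) ≠ 0 := by positivity
          push_cast
          field_simp
        rw [hterm, padicNorm.neg]
        have := frac_norm (p := 2) (k - 1) 1 one_pos
        rw [padicValNat.one, Nat.cast_one, div_one] at this
        rw [this, show ((2:ℚ))⁻¹ = ((2:ℕ):ℚ) ^ (-1 : ℤ) by norm_num]
        exact zpow_le_zpow_right₀ (by norm_num) (by omega)
      · -- i odd, ≠ 1
        have hz : _root_.bernoulli i = 0 := by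
          rw [bernoulli_eq_bernoulli'_of_ne_one hne]
          exact bernoulli'_eq_zero_of_odd hio (by rcases hio with ⟨b, rfl⟩; omega)
        rw [hz]
        simp only [zero_mul, zero_div, padicNorm.zero]
        norm_num
  rw [sub_eq_add_neg, padicNorm.add_eq_max_of_ne]
  · rw [padicNorm.neg, Nat.cast_one, padicNorm.one]
    rw [max_eq_left (by linarith [hT])]
  · rw [padicNorm.neg, Nat.cast_one, padicNorm.one]
    intro hcontra
    rw [← hcontra] at hT
    norm_num at hT

lemma two_dvd_bern_den (k : ℕ) (hk : Even k) (h0 : k ≠ 0) :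
    2 ∣ (_root_.bernoulli k).den := by
  haveI : Fact (Nat.Prime 2) := ⟨Nat.prime_two⟩
  by_contra h
  have hle : padicNorm 2 (_root_.bernoulli k) ≤ ((2:ℕ) : ℚ) ^ (0:ℕ) :=
    (norm_le_pow_iff_den 0 _).mpr (by simpa using h)
  have heq := bern_even_norm k hk h0
  rw [padicNorm.mul, padicNorm.padicNorm_p_of_prime] at heq
  have h2 : padicNorm 2 (_root_.bernoulli k) = 2 := by
    have : ((2:ℕ):ℚ) ≠ 0 := by norm_num
    field_simp at heq
    push_cast at heq
    linarith [heq]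
  rw [h2] at hle
  norm_num at hle

lemma bern_poly_coeff (n j : ℕ) (hj : j ≤ n) :
    (Polynomial.bernoulli n).coeff (n - j) = _root_.bernoulli j * (n.choose j : ℚ) := by
  rw [Polynomial.bernoulli, Polynomial.finset_sum_coeff]
  rw [Finset.sum_eq_single j]
  · rw [Polynomial.coeff_monomial, if_pos rfl]
  · intro i hi hne
    rw [Finset.mem_range] at hi
    rw [Polynomial.coeff_monomial, if_neg (by omega)]
  · intro h
    exact absurd (Finset.mem_range.mpr (by omega)) h

lemma bern_poly_coeff_hi (n m : ℕ) (hm : n < m) : (Polynomial.bernoulli n).coeff m = 0 := by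
  rw [Polynomial.bernoulli, Polynomial.finset_sum_coeff]
  refine Finset.sum_eq_zero (fun i hi => ?_)
  rw [Finset.mem_range] at hi
  rw [Polynomial.coeff_monomial, if_neg (by omega)]

lemma coeff_norm_le {p : ℕ} [hp : Fact p.Prime] (n m : ℕ) :
    padicNorm p ((Polynomial.bernoulli n).coeff m) ≤ (p : ℚ) ^ 1 := by
  have hp1 : (1:ℚ) ≤ (p:ℚ) := by exact_mod_cast hp.out.one_le
  rcases le_or_gt m n with hm | hm
  · rw [show m = n - (n - m) by omega, bern_poly_coeff n (n - m) (by omega), padicNorm.mul]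
    calc padicNorm p (_root_.bernoulli (n - m)) * padicNorm p ((n.choose (n - m) : ℚ))
        ≤ (p : ℚ) ^ 1 * 1 :=
          mul_le_mul (bern_norm_le _) (padicNorm.of_nat _) (padicNorm.nonneg _) (by positivity)
      _ = (p : ℚ) ^ 1 := mul_one _
  · rw [bern_poly_coeff_hi n m hm, padicNorm.zero]
    positivity

lemma coeff_den_not_sq {p : ℕ} [hp : Fact p.Prime] (n m : ℕ) :
    ¬ (p * p ∣ ((Polynomial.bernoulli n).coeff m).den) := by
  have := (norm_le_pow_iff_den (p := p) 1 ((Polynomial.bernoulli n).coeff m)).mp (coeff_norm_le n m)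
  simpa [pow_two, pow_succ] using this

lemma dvd_div_of_sq {d D q : ℕ} (hq : q.Prime) (hdD : d ∣ D) (hD2 : q * q ∣ D)
    (hd2 : ¬ (q * q ∣ d)) (hD0 : D ≠ 0) : d ∣ D / q := by
  have hqD : q ∣ D := (dvd_mul_right q q).trans hD2
  have hd0 : d ≠ 0 := by rintro rfl; exact hD0 (Nat.eq_zero_of_zero_dvd hdD)
  have hDq0 : D / q ≠ 0 := by
    have := Nat.div_pos (Nat.le_of_dvd (Nat.pos_of_ne_zero hD0) hqD) hq.pos
    omega
  rw [← Nat.factorization_le_iff_dvd hd0 hDq0, Nat.factorization_div hqD, Finsupp.le_def]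
  intro r
  rw [Finsupp.tsub_apply]
  have hle : d.factorization ≤ D.factorization := (Nat.factorization_le_iff_dvd hd0 hD0).mpr hdD
  have hler := Finsupp.le_def.mp hle r
  rcases eq_or_ne r q with rfl | hne
  · have h2D : 2 ≤ D.factorization r :=
      (hq.pow_dvd_iff_le_factorization hD0).mp (by rw [pow_two]; exact hD2)
    have h2d : d.factorization r ≤ 1 := by
      by_contra hc
      refine hd2 ?_
      rw [← pow_two]
      exact (hq.pow_dvd_iff_le_factorization hd0).mpr (by omega)
    rw [hq.factorization, Finsupp.single_apply, if_pos rfl]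
    omega
  · rw [hq.factorization, Finsupp.single_apply, if_neg (fun h => hne h.symm)]
    omega


theorem stmt19 (n : ℕ) (hn : 1 ≤ n) (D : ℕ)
    (hD : isDenom (Polynomial.bernoulli n) D) :
    Even D ∧ Squarefree D ∧ (_root_.bernoulli n).den ∣ D := by
  obtain ⟨hpos, hint, hmin⟩ := hD
  have hden_dvd : ∀ m, ((Polynomial.bernoulli n).coeff m).den ∣ D := by
    intro m
    obtain ⟨z, hz⟩ := hint m
    rw [Polynomial.coeff_smul, smul_eq_mul] at hz
    exact den_dvd_of_int_mul hpos hz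
  have hb : (_root_.bernoulli n).den ∣ D := by
    have h0 : (Polynomial.bernoulli n).coeff 0 = _root_.bernoulli n := by
      have := bern_poly_coeff n n le_rfl
      simpa using this
    have := hden_dvd 0
    rwa [h0] at this
  refine ⟨?_, ?_, hb⟩
  · rcases Nat.even_or_odd n with he | ho
    · have h2 : 2 ∣ (_root_.bernoulli n).den := two_dvd_bern_den n he (by omega)
      exact even_iff_two_dvd.mpr (h2.trans hb)
    · haveI : Fact (Nat.Prime 2) := ⟨Nat.prime_two⟩
      have hco : (Polynomial.bernoulli n).coeff (n - 1) =
          _root_.bernoulli 1 * (n.choose 1 : ℚ) := bern_poly_coeff n 1 hn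
      have h2 : 2 ∣ ((Polynomial.bernoulli n).coeff (n - 1)).den := by
        by_contra hcon
        have hle := (norm_le_pow_iff_den (p := 2) 0 _).mpr (by simpa using hcon)
        rw [hco, _root_.bernoulli_one, Nat.choose_one_right] at hle
        have hn2 : ¬ (2 ∣ n) := by rcases ho with ⟨a, rfl⟩; omega
        have hnorm : padicNorm 2 ((-1/2 : ℚ) * (n : ℚ)) = 2 := by
          rw [padicNorm.mul]
          have h1 : padicNorm 2 ((n : ℚ)) = 1 := (padicNorm.nat_eq_one_iff n).mpr hn2
          have hhalf : padicNorm 2 ((-1/2 : ℚ)) = 2 := by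
            rw [show (-1/2 : ℚ) = -(1/2) by ring, padicNorm.neg, padicNorm.div, padicNorm.one]
            rw [show ((2:ℚ)) = ((2:ℕ):ℚ) by norm_num, padicNorm.padicNorm_p_of_prime]
            norm_num
          rw [h1, hhalf, mul_one]
        rw [hnorm] at hle
        norm_num at hle
      exact even_iff_two_dvd.mpr (h2.trans (hden_dvd (n - 1)))
  · rw [Nat.squarefree_iff_prime_squarefree]
    intro q hq hsq
    haveI : Fact q.Prime := ⟨hq⟩
    have hqD : q ∣ D := (dvd_mul_right q q).trans hsq
    have he : 0 < D / q := Nat.div_pos (Nat.le_of_dvd hpos hqD) hq.pos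
    have hIntE : isIntPoly (((D / q : ℕ) : ℚ) • Polynomial.bernoulli n) := by
      intro m
      rw [Polynomial.coeff_smul, smul_eq_mul]
      exact exists_int_of_den_dvd
        (dvd_div_of_sq hq (hden_dvd m) hsq (coeff_den_not_sq n m) hpos.ne')
    have hle := hmin (D / q) he hIntE
    have hlt : D / q < D := Nat.div_lt_self hpos hq.one_lt
    omega
end
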